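/- arXiv:math/0511614 — 5 statements merged into one kernel-verified Lean document; each statement's English description precedes it below -/
import Mathlib

section
/- Let 𝒜' ⊂ 𝒜 be a nonempty proper subset, ℜ_* ⊂ ℜ an 𝒜'-decorated Rauzy class, M ∈ ℕ and q ∈ ℝ₊^𝒜. Let Γ ⊂ Π_*(ℜ_*) be a family of 𝒜'-colored paths such that N_{𝒜∖𝒜'}(B_γ·q) ≥ 2^M·N_{𝒜∖𝒜'}(q) for every γ ∈ Γ. Then for every π ∈ ℜ_*, P_q(Γ | π) := Leb(∪{Λ_{q,γ} : γ ∈ Γ starts at π}) / Leb(Λ_q) ≤ 2^{−M}. -/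
open scoped BigOperators
open Matrix

/-- A permutation pair: two bijections from the alphabet onto `Fin d`
(positions are 0-based; "position k" in 1-based terms corresponds to value `k-1`). -/
structure PermPair (A : Type) [Fintype A] where
  top : A ≃ Fin (Fintype.card A)
  bot : A ≃ Fin (Fintype.card A)

namespace Rauzy

variable {A : Type} [Fintype A] [DecidableEq A]

/-- Irreducibility of a permutation pair. -/
def Irreducible (π : PermPair A) : Prop :=
  ∀ k : ℕ, 0 < k → k < Fintype.card A →
    {a : A | (π.top a : ℕ) < k} ≠ {a : A | (π.bot a : ℕ) < k}

/-- The top operation of Rauzy induction, with its winner and loser. -/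
def IsTopStep (π π' : PermPair A) (w l : A) : Prop :=
  (π.top w : ℕ) = Fintype.card A - 1 ∧
  (π.bot l : ℕ) = Fintype.card A - 1 ∧
  π'.top = π.top ∧
  ((π'.bot l : ℕ) = (π.bot w : ℕ) + 1) ∧
  ∀ ξ : A, ξ ≠ l →
    (π'.bot ξ : ℕ) =
      if (π.bot ξ : ℕ) ≤ (π.bot w : ℕ) then (π.bot ξ : ℕ) else (π.bot ξ : ℕ) + 1

/-- The bottom operation of Rauzy induction, with its winner and loser. -/
def IsBottomStep (π π' : PermPair A) (w l : A) : Prop :=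
  (π.bot w : ℕ) = Fintype.card A - 1 ∧
  (π.top l : ℕ) = Fintype.card A - 1 ∧
  π'.bot = π.bot ∧
  ((π'.top l : ℕ) = (π.top w : ℕ) + 1) ∧
  ∀ ξ : A, ξ ≠ l →
    (π'.top ξ : ℕ) =
      if (π.top ξ : ℕ) ≤ (π.top w : ℕ) then (π.top ξ : ℕ) else (π.top ξ : ℕ) + 1

/-- One step (arrow) of the Rauzy diagram. -/
def IsStep (π π' : PermPair A) (w l : A) : Prop :=
  IsTopStep π π' w l ∨ IsBottomStep π π' w l

/-- A Rauzy class: a minimal nonempty set of irreducible permutation pairs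
invariant under both Rauzy operations. -/
def IsRauzyClass (R : Set (PermPair A)) : Prop :=
  R.Nonempty ∧ (∀ π ∈ R, Irreducible π) ∧
  (∀ π ∈ R, ∀ π' w l, IsStep π π' w l → π' ∈ R) ∧
  ∀ R' : Set (PermPair A), R' ⊆ R → R'.Nonempty →
    (∀ π ∈ R', ∀ π' w l, IsStep π π' w l → π' ∈ R') → R' = R

/-- An arrow of the Rauzy diagram (datum). -/
structure Arrow (A : Type) [Fintype A] where
  src : PermPair A
  dst : PermPair A
  winner : A
  loser : A

/-- Validity of an arrow. -/
def Arrow.Valid (a : Arrow A) : Prop := IsStep a.src a.dst a.winner a.loser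

/-- The arrows form a chain of valid arrows starting at the given vertex. -/
def ChainFrom : PermPair A → List (Arrow A) → Prop
  | _, [] => True
  | π, a :: rest => a.src = π ∧ a.Valid ∧ ChainFrom a.dst rest

/-- A path in the Rauzy diagram: a start vertex and a list of arrows.
Trivial paths (empty arrow lists) are identified with vertices. -/
structure RPath (A : Type) [Fintype A] where
  start : PermPair A
  arrows : List (Arrow A)

/-- The endpoint of a path. -/
def RPath.endp (p : RPath A) : PermPair A :=
  p.arrows.foldl (fun _ a => a.dst) p.start

/-- A path belongs to `Π(ℜ)`. -/
def RPath.IsValid (R : Set (PermPair A)) (p : RPath A) : Prop :=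
  p.start ∈ R ∧ ChainFrom p.start p.arrows

/-- The matrix `B_γ` of an arrow: `B_γ · e_ξ = e_ξ` for `ξ ≠ winner` and
`B_γ · e_winner = e_winner + e_loser`. -/
noncomputable def arrowMatrix (a : Arrow A) : Matrix A A ℝ :=
  1 + Matrix.single a.loser a.winner 1

/-- The matrix `B_γ` of a path, with `B_{γ₁γ₂} = B_{γ₂} · B_{γ₁}`. -/
noncomputable def pathMatrix (p : RPath A) : Matrix A A ℝ :=
  p.arrows.foldl (fun M a => arrowMatrix a * M) 1

/-- `Λ_q = {λ ∈ ℝ₊^𝒜 : ⟨λ, q⟩ < 1}`. -/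
def Lambda (q : A → ℝ) : Set (A → ℝ) :=
  {l | (∀ a, 0 < l a) ∧ ∑ a, l a * q a < 1}

/-- `Λ_{q,γ} = B_γ^* · Λ_{B_γ · q}`. -/
noncomputable def lamSet (q : A → ℝ) (p : RPath A) : Set (A → ℝ) :=
  (fun l => (pathMatrix p)ᵀ.mulVec l) '' Lambda ((pathMatrix p).mulVec q)

/-- `Leb(∪_{γ ∈ Γ} Λ_{q,γ}) / Leb(Λ_q)`. -/
noncomputable def famProb (q : A → ℝ) (Γ : Set (RPath A)) : ℝ :=
  (MeasureTheory.volume (⋃ p ∈ Γ, lamSet q p)).toReal /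
    (MeasureTheory.volume (Lambda q)).toReal

/-- `P_q(𝒫 | π)`: the relative Lebesgue measure of the union of the `Λ_{q,γ}`
over paths `γ ∈ Π(ℜ)` starting at `π` and satisfying `𝒫`. -/
noncomputable def pathProb (R : Set (PermPair A)) (q : A → ℝ) (π : PermPair A)
    (P : RPath A → Prop) : ℝ :=
  famProb q {p : RPath A | p.IsValid R ∧ p.start = π ∧ P p}

/-- `M_{𝒜'}(q) = max_{α ∈ 𝒜'} q_α`. -/
noncomputable def bigM (S : Finset A) (q : A → ℝ) : ℝ :=
  if h : S.Nonempty then S.sup' h q else 0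

/-- `M(q) = max_{α ∈ 𝒜} q_α`. -/
noncomputable def MM (q : A → ℝ) : ℝ := bigM Finset.univ q

/-- `m(q) = min_{α ∈ 𝒜} q_α`. -/
noncomputable def littleM (q : A → ℝ) : ℝ :=
  if h : (Finset.univ : Finset A).Nonempty then Finset.univ.inf' h q else 0

/-- A path is complete if every letter wins in at least one of its arrows. -/
def RPath.Complete (p : RPath A) : Prop :=
  ∀ a : A, ∃ arr ∈ p.arrows, arr.winner = a

/-- A path is `k`-complete if it is a concatenation of `k` complete paths. -/
def RPath.KComplete (p : RPath A) (k : ℕ) : Prop :=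
  ∃ L : List (List (Arrow A)), L.length = k ∧ L.flatten = p.arrows ∧
    ∀ seg ∈ L, ∀ a : A, ∃ arr ∈ seg, arr.winner = a

/-- A path is positive if all entries of its matrix are positive. -/
def RPath.Positive (p : RPath A) : Prop :=
  ∀ x y : A, 0 < pathMatrix p x y

/-- The cone `Θ_π`. -/
def Theta (π : PermPair A) : Set (A → ℝ) :=
  {τ | ∀ k : ℕ, 0 < k → k < Fintype.card A →
     (0 < ∑ ξ ∈ Finset.univ.filter (fun ξ => (π.top ξ : ℕ) < k), τ ξ) ∧
     (∑ ξ ∈ Finset.univ.filter (fun ξ => (π.bot ξ : ℕ) < k), τ ξ < 0)}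

end Rauzy

namespace Rauzy

variable {A : Type} [Fintype A] [DecidableEq A]

/-- `π` and `π'` can be joined by an `𝒜'`-colored path (all winners in `S`). -/
def JoinedBy (R : Set (PermPair A)) (S : Finset A) (π π' : PermPair A) : Prop :=
  ∃ p : RPath A, p.IsValid R ∧ (∀ arr ∈ p.arrows, arr.winner ∈ S) ∧
    p.start = π ∧ p.endp = π'

/-- An `𝒜'`-decorated Rauzy class: a maximal subset of `R` whose elements can be
pairwise joined by `𝒜'`-colored paths. -/
def IsDecorated (R : Set (PermPair A)) (S : Finset A) (Rs : Set (PermPair A)) : Prop :=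
  Rs ⊆ R ∧ Rs.Nonempty ∧ (∀ π ∈ Rs, ∀ π' ∈ Rs, JoinedBy R S π π') ∧
  ∀ Rs' : Set (PermPair A), Rs ⊆ Rs' → Rs' ⊆ R →
    (∀ π ∈ Rs', ∀ π' ∈ Rs', JoinedBy R S π π') → Rs' = Rs


section Aux

set_option linter.unusedSectionVars false

open MeasureTheory

lemma permPair_ext {x y : PermPair A} (h1 : x.top = y.top) (h2 : x.bot = y.bot) : x = y := by
  cases x; cases y; cases h1; cases h2; rfl

lemma arrow_ext {x y : Arrow A} (h1 : x.src = y.src) (h2 : x.dst = y.dst)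
    (h3 : x.winner = y.winner) (h4 : x.loser = y.loser) : x = y := by
  cases x; cases y; cases h1; cases h2; cases h3; cases h4; rfl

lemma stdBasis_mulVec (i j : A) (c : ℝ) (v : A → ℝ) :
    (Matrix.single i j c).mulVec v = fun a => if a = i then c * v j else 0 := by
  funext a
  simp only [Matrix.mulVec, dotProduct, Matrix.single, Matrix.of_apply]
  by_cases h : a = i
  · subst h
    rw [if_pos rfl, Finset.sum_eq_single j]
    · simp
    · intro b _ hb; simp [hb.symm]
    · simp
  · rw [if_neg h]
    apply Finset.sum_eq_zero
    intro b _
    have : ¬ (i = a ∧ j = b) := fun ⟨h1, _⟩ => h h1.symm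
    simp [this]

lemma arrowMatrix_mulVec (e : Arrow A) (v : A → ℝ) :
    (arrowMatrix e).mulVec v = fun a => v a + if a = e.loser then v e.winner else 0 := by
  funext a
  rw [arrowMatrix, Matrix.add_mulVec, Matrix.one_mulVec, stdBasis_mulVec]
  simp

lemma arrowMatrixT_mulVec (e : Arrow A) (v : A → ℝ) :
    (arrowMatrix e)ᵀ.mulVec v = fun a => v a + if a = e.winner then v e.loser else 0 := by
  have h : (arrowMatrix e)ᵀ = 1 + Matrix.single e.winner e.loser 1 := by
    rw [arrowMatrix, Matrix.transpose_add, Matrix.transpose_one]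
    congr 1
    ext a b
    simp only [Matrix.transpose_apply, Matrix.single, Matrix.of_apply]
    exact if_congr and_comm rfl rfl
  rw [h, Matrix.add_mulVec, Matrix.one_mulVec, stdBasis_mulVec]
  funext a; simp

lemma foldl_eq (l : List (Arrow A)) : ∀ M : Matrix A A ℝ,
    l.foldl (fun M a => arrowMatrix a * M) M = l.foldl (fun M a => arrowMatrix a * M) 1 * M := by
  induction l with
  | nil => intro M; simp
  | cons e t ih =>
    intro M
    simp only [List.foldl_cons]
    rw [ih (arrowMatrix e * M), ih (arrowMatrix e * 1), mul_one, mul_assoc]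

lemma pathMatrix_nil (π : PermPair A) : pathMatrix (⟨π, []⟩ : RPath A) = 1 := rfl

lemma pathMatrix_arrows (p : RPath A) :
    pathMatrix p = p.arrows.foldl (fun M a => arrowMatrix a * M) 1 := rfl

lemma pathMatrix_cons (π π' : PermPair A) (e : Arrow A) (rest : List (Arrow A)) :
    pathMatrix (⟨π, e :: rest⟩ : RPath A) = pathMatrix (⟨π', rest⟩ : RPath A) * arrowMatrix e := by
  show (e :: rest).foldl (fun M a => arrowMatrix a * M) 1 = _
  rw [List.foldl_cons, foldl_eq, mul_one]
  rfl

lemma arrow_loser_ne_winner (e : Arrow A) (h : e.Valid) : e.loser ≠ e.winner := by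
  have hcard : 0 < Fintype.card A := Fintype.card_pos_iff.2 ⟨e.winner⟩
  intro hlw
  rcases h with ⟨h1, h2, _, h4, _⟩ | ⟨h1, h2, _, h4, _⟩
  · rw [hlw] at h2
    rw [h2] at h4
    have := (e.dst.bot e.loser).isLt
    omega
  · rw [hlw] at h2
    rw [h2] at h4
    have := (e.dst.top e.loser).isLt
    omega

lemma det_arrowMatrix (e : Arrow A) (h : e.Valid) : (arrowMatrix e).det = 1 := by
  have h1 : arrowMatrix e = Matrix.transvection e.loser e.winner 1 := rfl
  rw [h1, Matrix.det_transvection_of_ne _ _ (arrow_loser_ne_winner e h) 1]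

lemma det_pathMatrix : ∀ (l : List (Arrow A)) (π : PermPair A), ChainFrom π l →
    (pathMatrix (⟨π, l⟩ : RPath A)).det = 1 := by
  intro l
  induction l with
  | nil => intro π _; rw [pathMatrix_nil]; simp
  | cons e rest ih =>
    intro π h
    have h' : e.src = π ∧ e.Valid ∧ ChainFrom e.dst rest := h
    rw [pathMatrix_cons π e.dst, Matrix.det_mul, ih e.dst h'.2.2, det_arrowMatrix e h'.2.1,
      one_mul]

lemma mulVec_arrow_pos (e : Arrow A) (q : A → ℝ) (hq : ∀ a, 0 < q a) :
    ∀ a, 0 < (arrowMatrix e).mulVec q a := by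
  intro a
  rw [arrowMatrix_mulVec]
  by_cases h : a = e.loser
  · simp only [h, if_pos rfl]
    exact add_pos (hq _) (hq _)
  · simp only [if_neg h, add_zero]
    exact hq a

lemma mulVec_pos : ∀ (l : List (Arrow A)) (π : PermPair A) (q : A → ℝ), (∀ a, 0 < q a) →
    ∀ a, 0 < (pathMatrix (⟨π, l⟩ : RPath A)).mulVec q a := by
  intro l
  induction l with
  | nil => intro π q hq a; rw [pathMatrix_nil, Matrix.one_mulVec]; exact hq a
  | cons e rest ih =>
    intro π q hq a
    rw [pathMatrix_cons π e.dst, ← Matrix.mulVec_mulVec]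
    exact ih e.dst _ (mulVec_arrow_pos e q hq) a

lemma mulVecT_pos : ∀ (l : List (Arrow A)) (π : PermPair A) (h : A → ℝ), (∀ a, 0 < h a) →
    ∀ a, 0 < (pathMatrix (⟨π, l⟩ : RPath A))ᵀ.mulVec h a := by
  intro l
  induction l with
  | nil => intro π h hh a; rw [pathMatrix_nil, Matrix.transpose_one, Matrix.one_mulVec]; exact hh a
  | cons e rest ih =>
    intro π h hh a
    rw [pathMatrix_cons π e.dst, Matrix.transpose_mul, ← Matrix.mulVec_mulVec,
      arrowMatrixT_mulVec]
    by_cases hc : a = e.winner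
    · simp only [hc, if_pos rfl]
      exact add_pos (ih e.dst h hh _) (ih e.dst h hh _)
    · simp only [if_neg hc, add_zero]
      exact ih e.dst h hh a

lemma lamSet_eta (q : A → ℝ) (γ : RPath A) :
    lamSet q γ = lamSet q (⟨γ.start, γ.arrows⟩ : RPath A) := rfl

lemma lamSet_subset (q : A → ℝ) (p : RPath A) : lamSet q p ⊆ Lambda q := by
  rintro x ⟨h, ⟨hpos, hsum⟩, rfl⟩
  constructor
  · intro a
    exact mulVecT_pos p.arrows p.start h hpos a
  · have key : (pathMatrix p)ᵀ.mulVec h ⬝ᵥ q = h ⬝ᵥ (pathMatrix p).mulVec q := by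
      rw [Matrix.mulVec_transpose, ← Matrix.dotProduct_mulVec]
    have h1 : ∑ a, (pathMatrix p)ᵀ.mulVec h a * q a = (pathMatrix p)ᵀ.mulVec h ⬝ᵥ q := rfl
    have h2 : ∑ a, h a * (pathMatrix p).mulVec q a = h ⬝ᵥ (pathMatrix p).mulVec q := rfl
    rw [h1, key, ← h2]
    exact hsum

lemma image_toLin' (B : Matrix A A ℝ) (s : Set (A → ℝ)) :
    (fun l => B.mulVec l) '' s = (Matrix.toLin' B) '' s := by
  apply Set.image_congr
  intro x _
  simp [Matrix.toLin'_apply]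

lemma vol_image (B : Matrix A A ℝ) (hB : B.det = 1) (s : Set (A → ℝ)) :
    volume ((fun l => B.mulVec l) '' s) = volume s := by
  rw [image_toLin', Measure.addHaar_image_linearMap, LinearMap.det_toLin', hB]
  simp

lemma lamSet_cons (q : A → ℝ) (π : PermPair A) (e : Arrow A) (rest : List (Arrow A)) :
    lamSet q (⟨π, e :: rest⟩ : RPath A)
      = (fun h => (arrowMatrix e)ᵀ.mulVec h) ''
          lamSet ((arrowMatrix e).mulVec q) (⟨e.dst, rest⟩ : RPath A) := by
  have hfun : (fun l => (pathMatrix (⟨π, e :: rest⟩ : RPath A))ᵀ *ᵥ l)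
      = (fun h => (arrowMatrix e)ᵀ *ᵥ h) ∘ (fun h => (pathMatrix (⟨e.dst, rest⟩ : RPath A))ᵀ *ᵥ h) := by
    funext l
    simp only [Function.comp_apply]
    rw [pathMatrix_cons π e.dst, Matrix.transpose_mul, ← Matrix.mulVec_mulVec]
  have harg : Lambda ((pathMatrix (⟨π, e :: rest⟩ : RPath A)) *ᵥ q)
      = Lambda ((pathMatrix (⟨e.dst, rest⟩ : RPath A)) *ᵥ ((arrowMatrix e) *ᵥ q)) := by
    rw [pathMatrix_cons π e.dst, ← Matrix.mulVec_mulVec]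
  unfold lamSet
  rw [hfun, harg, Set.image_comp]

lemma vol_lamSet (q : A → ℝ) (p : RPath A) (h : ChainFrom p.start p.arrows) :
    volume (lamSet q p) = volume (Lambda ((pathMatrix p).mulVec q)) := by
  have hdet : ((pathMatrix p)ᵀ).det = 1 := by
    rw [Matrix.det_transpose]
    exact det_pathMatrix p.arrows p.start h
  exact vol_image _ hdet _

lemma lambda_eq_image (q : A → ℝ) (hq : ∀ a, 0 < q a) :
    Lambda q = (fun l => (Matrix.diagonal fun a => (q a)⁻¹).mulVec l) ''
      Lambda (fun _ : A => (1 : ℝ)) := by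
  ext l
  simp only [Set.mem_image, Lambda, Set.mem_setOf_eq]
  constructor
  · rintro ⟨hpos, hsum⟩
    refine ⟨fun a => l a * q a, ⟨fun a => mul_pos (hpos a) (hq a), by simpa using hsum⟩, ?_⟩
    funext a
    rw [Matrix.mulVec_diagonal]
    rw [inv_mul_eq_div, mul_div_assoc, div_self (hq a).ne', mul_one]
  · rintro ⟨x, ⟨hx, hs⟩, rfl⟩
    have heval : ∀ a, (Matrix.diagonal fun a => (q a)⁻¹).mulVec x a = (q a)⁻¹ * x a :=
      fun a => Matrix.mulVec_diagonal _ _ _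
    constructor
    · intro a
      rw [heval a]
      exact mul_pos (inv_pos.2 (hq a)) (hx a)
    · have : ∀ a ∈ Finset.univ, (Matrix.diagonal fun a => (q a)⁻¹).mulVec x a * q a = x a := by
        intro a _
        rw [heval a]
        rw [inv_mul_eq_div, div_mul_eq_mul_div, mul_div_assoc, div_self (hq a).ne', mul_one]
      rw [Finset.sum_congr rfl this]
      simpa using hs

lemma vol_Lambda (q : A → ℝ) (hq : ∀ a, 0 < q a) :
    volume (Lambda q)
      = ENNReal.ofReal (∏ a, (q a)⁻¹) * volume (Lambda (fun _ : A => (1 : ℝ))) := by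
  rw [lambda_eq_image q hq, image_toLin', Measure.addHaar_image_linearMap, LinearMap.det_toLin',
    Matrix.det_diagonal]
  congr 2
  rw [abs_of_nonneg]
  exact Finset.prod_nonneg fun a _ => inv_nonneg.2 (hq a).le

lemma vol_Lambda_ne_top (q : A → ℝ) (hq : ∀ a, 0 < q a) : volume (Lambda q) ≠ ⊤ := by
  have hsub : Lambda q ⊆ Set.pi Set.univ fun a => Set.Ioo (0 : ℝ) (q a)⁻¹ := by
    rintro l ⟨hpos, hsum⟩
    intro a _
    refine ⟨hpos a, ?_⟩
    have h1 : l a * q a ≤ ∑ b, l b * q b :=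
      Finset.single_le_sum (fun b _ => (mul_pos (hpos b) (hq b)).le) (Finset.mem_univ a)
    have h2 : l a * q a < 1 := lt_of_le_of_lt h1 hsum
    have := (lt_div_iff₀ (hq a)).2 h2
    rwa [one_div] at this
  have hfin : volume (Set.pi Set.univ fun a => Set.Ioo (0 : ℝ) (q a)⁻¹) < ⊤ := by
    rw [volume_pi_pi]
    exact ENNReal.prod_lt_top fun a _ => by simp [Real.volume_Ioo]
  exact ((measure_mono hsub).trans_lt hfin).ne

noncomputable def gq (S : Finset A) (q q' : A → ℝ) : ℝ := ∏ a ∈ Finset.univ \ S, q' a / q a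

lemma gq_pos (S : Finset A) {q q' : A → ℝ} (hq : ∀ a, 0 < q a) (hq' : ∀ a, 0 < q' a) :
    0 < gq S q q' :=
  Finset.prod_pos fun a _ => div_pos (hq' a) (hq a)

lemma gq_self (S : Finset A) (q : A → ℝ) (hq : ∀ a, 0 < q a) : gq S q q = 1 :=
  Finset.prod_eq_one fun a _ => div_self (hq a).ne'

lemma gq_trans (S : Finset A) (q q' q'' : A → ℝ) (hq' : ∀ a, q' a ≠ 0) :
    gq S q q' * gq S q' q'' = gq S q q'' := by
  rw [gq, gq, gq, ← Finset.prod_mul_distrib]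
  refine Finset.prod_congr rfl fun a _ => ?_
  rw [div_mul_div_comm, mul_comm (q' a) (q'' a), mul_div_mul_right _ _ (hq' a)]

lemma gq_arrow (S : Finset A) (e : Arrow A) (q : A → ℝ) (hq : ∀ a, 0 < q a) :
    gq S q ((arrowMatrix e).mulVec q)
      = if e.loser ∈ S then 1 else (q e.loser + q e.winner) / q e.loser := by
  rw [gq]
  by_cases hl : e.loser ∈ S
  · rw [if_pos hl]
    refine Finset.prod_eq_one fun a ha => ?_
    have hne : a ≠ e.loser := by
      rintro rfl
      exact (Finset.mem_sdiff.1 ha).2 hl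
    rw [arrowMatrix_mulVec]
    simp [hne, div_self (hq a).ne']
  · rw [if_neg hl]
    have hmem : e.loser ∈ Finset.univ \ S := Finset.mem_sdiff.2 ⟨Finset.mem_univ _, hl⟩
    rw [← Finset.mul_prod_erase _ _ hmem]
    have h1 : (arrowMatrix e).mulVec q e.loser / q e.loser
        = (q e.loser + q e.winner) / q e.loser := by
      rw [arrowMatrix_mulVec]
      simp
    have h2 : ∏ a ∈ (Finset.univ \ S).erase e.loser, (arrowMatrix e).mulVec q a / q a = 1 := by
      refine Finset.prod_eq_one fun a ha => ?_
      have hne : a ≠ e.loser := (Finset.mem_erase.1 ha).1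
      rw [arrowMatrix_mulVec]
      simp [hne, div_self (hq a).ne']
    rw [h1, h2, mul_one]

lemma vol_step (S : Finset A) (e : Arrow A) (q : A → ℝ) (hq : ∀ a, 0 < q a) :
    volume (Lambda ((arrowMatrix e).mulVec q))
        * ENNReal.ofReal (gq S q ((arrowMatrix e).mulVec q))
      = ENNReal.ofReal
          (if e.loser ∈ S then q e.loser / (q e.loser + q e.winner) else 1)
        * volume (Lambda q) := by
  have hq' : ∀ a, 0 < (arrowMatrix e).mulVec q a := mulVec_arrow_pos e q hq
  have hsumpos : 0 < q e.loser + q e.winner := add_pos (hq _) (hq _)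
  have hprod : ∏ a, ((arrowMatrix e).mulVec q a)⁻¹
      = (q e.loser + q e.winner)⁻¹ * ∏ a ∈ Finset.univ.erase e.loser, (q a)⁻¹ := by
    rw [← Finset.mul_prod_erase _ _ (Finset.mem_univ e.loser)]
    congr 1
    · rw [arrowMatrix_mulVec]; simp
    · refine Finset.prod_congr rfl fun a ha => ?_
      have hne : a ≠ e.loser := (Finset.mem_erase.1 ha).1
      rw [arrowMatrix_mulVec]
      simp [hne]
  have hprodq : ∏ a, (q a)⁻¹ = (q e.loser)⁻¹ * ∏ a ∈ Finset.univ.erase e.loser, (q a)⁻¹ :=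
    (Finset.mul_prod_erase _ _ (Finset.mem_univ e.loser)).symm
  have hgnn : 0 ≤ gq S q ((arrowMatrix e).mulVec q) := (gq_pos S hq hq').le
  have hcnn : 0 ≤ (if e.loser ∈ S then q e.loser / (q e.loser + q e.winner) else 1) := by
    split
    · exact (div_pos (hq _) hsumpos).le
    · exact zero_le_one
  rw [vol_Lambda _ hq', vol_Lambda q hq, gq_arrow S e q hq]
  have hnn1 : 0 ≤ ∏ a, ((arrowMatrix e).mulVec q a)⁻¹ :=
    Finset.prod_nonneg fun a _ => inv_nonneg.2 (hq' a).le
  rw [mul_right_comm, ← ENNReal.ofReal_mul hnn1, ← mul_assoc, ← ENNReal.ofReal_mul hcnn]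
  congr 2
  have hP : 0 < ∏ x ∈ Finset.univ.erase e.loser, q x :=
    Finset.prod_pos fun a _ => hq a
  rw [hprod, hprodq]
  by_cases hl : e.loser ∈ S
  · rw [if_pos hl, if_pos hl, mul_one, ← mul_assoc, div_mul_eq_mul_div,
      mul_inv_cancel₀ (hq e.loser).ne', one_div]
  · have key : (q e.loser + q e.winner)⁻¹ * ((q e.loser + q e.winner) / q e.loser)
        = (q e.loser)⁻¹ := by
      rw [← mul_div_assoc, inv_mul_cancel₀ hsumpos.ne', one_div]
    rw [if_neg hl, if_neg hl, one_mul, mul_right_comm, key]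

lemma topStep_unique (π : PermPair A) (e₁ e₂ : Arrow A)
    (hs₁ : e₁.src = π) (hs₂ : e₂.src = π)
    (h₁ : IsTopStep π e₁.dst e₁.winner e₁.loser) (h₂ : IsTopStep π e₂.dst e₂.winner e₂.loser) :
    e₁ = e₂ := by
  obtain ⟨a1, a2, a3, a4, a5⟩ := h₁
  obtain ⟨b1, b2, b3, b4, b5⟩ := h₂
  have hw : e₁.winner = e₂.winner := π.top.injective (Fin.val_injective (a1.trans b1.symm))
  have hl : e₁.loser = e₂.loser := π.bot.injective (Fin.val_injective (a2.trans b2.symm))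
  have hdst : e₁.dst = e₂.dst := by
    refine permPair_ext (a3.trans b3.symm) ?_
    apply Equiv.ext
    intro a
    apply Fin.val_injective
    by_cases ha : a = e₁.loser
    · subst ha
      rw [a4, hl, b4, hw]
    · rw [a5 a ha, b5 a (by rwa [← hl]), hw]
  exact arrow_ext (hs₁.trans hs₂.symm) hdst hw hl

lemma botStep_unique (π : PermPair A) (e₁ e₂ : Arrow A)
    (hs₁ : e₁.src = π) (hs₂ : e₂.src = π)
    (h₁ : IsBottomStep π e₁.dst e₁.winner e₁.loser)
    (h₂ : IsBottomStep π e₂.dst e₂.winner e₂.loser) :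
    e₁ = e₂ := by
  obtain ⟨a1, a2, a3, a4, a5⟩ := h₁
  obtain ⟨b1, b2, b3, b4, b5⟩ := h₂
  have hw : e₁.winner = e₂.winner := π.bot.injective (Fin.val_injective (a1.trans b1.symm))
  have hl : e₁.loser = e₂.loser := π.top.injective (Fin.val_injective (a2.trans b2.symm))
  have hdst : e₁.dst = e₂.dst := by
    refine permPair_ext ?_ (a3.trans b3.symm)
    apply Equiv.ext
    intro a
    apply Fin.val_injective
    by_cases ha : a = e₁.loser
    · subst ha
      rw [a4, hl, b4, hw]
    · rw [a5 a ha, b5 a (by rwa [← hl]), hw]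
  exact arrow_ext (hs₁.trans hs₂.symm) hdst hw hl

def GSet (S : Finset A) (q : A → ℝ) (π : PermPair A) (t : ℝ) (n : ℕ) : Set (RPath A) :=
  {γ | γ.start = π ∧ ChainFrom π γ.arrows ∧ (∀ arr ∈ γ.arrows, arr.winner ∈ S) ∧
    γ.arrows.length ≤ n ∧ t ≤ gq S q ((pathMatrix γ).mulVec q)}

lemma core_small (S : Finset A) (q : A → ℝ) (π : PermPair A) (t : ℝ) (ht1 : t ≤ 1) (n : ℕ) :
    ENNReal.ofReal t * volume (⋃ γ ∈ GSet S q π t n, lamSet q γ) ≤ volume (Lambda q) := by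
  have h1 : volume (⋃ γ ∈ GSet S q π t n, lamSet q γ) ≤ volume (Lambda q) :=
    measure_mono (Set.iUnion₂_subset fun γ _ => lamSet_subset q γ)
  calc ENNReal.ofReal t * volume (⋃ γ ∈ GSet S q π t n, lamSet q γ)
      ≤ 1 * volume (Lambda q) := mul_le_mul' (ENNReal.ofReal_le_one.2 ht1) h1
    _ = volume (Lambda q) := one_mul _

lemma gset_trivial (S : Finset A) (q : A → ℝ) (hq : ∀ a, 0 < q a) (π : PermPair A) (t : ℝ)
    (ht1 : 1 < t) (n : ℕ) (γ : RPath A) (hγ : γ ∈ GSet S q π t n) : γ.arrows ≠ [] := by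
  intro harr
  obtain ⟨h1, h2, h3, h4, h5⟩ := hγ
  have hpm : pathMatrix γ = 1 := by
    rw [pathMatrix_arrows, harr]
    rfl
  rw [hpm, Matrix.one_mulVec, gq_self S q hq] at h5
  linarith

lemma core (S : Finset A) : ∀ (n : ℕ) (q : A → ℝ), (∀ a, 0 < q a) → ∀ (π : PermPair A) (t : ℝ),
    0 < t →
    ENNReal.ofReal t * volume (⋃ γ ∈ GSet S q π t n, lamSet q γ) ≤ volume (Lambda q) := by
  intro n
  induction n with
  | zero =>
    intro q hq π t ht
    by_cases ht1 : t ≤ 1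
    · exact core_small S q π t ht1 0
    push_neg at ht1
    have hempty : GSet S q π t 0 = ∅ := by
      ext γ
      simp only [Set.mem_empty_iff_false, iff_false]
      intro hγ
      exact gset_trivial S q hq π t ht1 0 γ hγ (List.length_eq_zero_iff.1 (Nat.le_zero.1 hγ.2.2.2.1))
    rw [hempty]
    simp
  | succ n ih =>
    intro q hq π t ht
    by_cases ht1 : t ≤ 1
    · exact core_small S q π t ht1 (n + 1)
    push_neg at ht1
    classical
    set G := GSet S q π t (n + 1) with hGdef
    have branch : ∀ P : Arrow A → Prop,
        (∀ e₁ e₂, e₁.src = π → e₂.src = π → P e₁ → P e₂ → e₁ = e₂) →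
        (ENNReal.ofReal t *
            volume (⋃ γ ∈ {γ ∈ G | ∃ e rest, γ.arrows = e :: rest ∧ P e}, lamSet q γ) = 0) ∨
        ∃ e₀ : Arrow A, e₀.src = π ∧ e₀.Valid ∧ e₀.winner ∈ S ∧ P e₀ ∧
          ENNReal.ofReal t *
              volume (⋃ γ ∈ {γ ∈ G | ∃ e rest, γ.arrows = e :: rest ∧ P e}, lamSet q γ)
            ≤ ENNReal.ofReal
                (if e₀.loser ∈ S then q e₀.loser / (q e₀.loser + q e₀.winner) else 1)
              * volume (Lambda q) := by
      intro P hP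
      by_cases hne : ({γ ∈ G | ∃ e rest, γ.arrows = e :: rest ∧ P e} : Set (RPath A)).Nonempty
      swap
      · left
        rw [Set.not_nonempty_iff_eq_empty.1 hne]
        simp
      obtain ⟨γ₀, hγ₀G, e₀, rest₀, harr₀, hP₀⟩ := hne
      right
      have hchain₀ : ChainFrom π γ₀.arrows := hγ₀G.2.1
      rw [harr₀] at hchain₀
      have hsrc₀ : e₀.src = π := hchain₀.1
      have hval₀ : e₀.Valid := hchain₀.2.1
      have hwS₀ : e₀.winner ∈ S :=
        hγ₀G.2.2.1 e₀ (by rw [harr₀]; exact List.mem_cons_self)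
      refine ⟨e₀, hsrc₀, hval₀, hwS₀, hP₀, ?_⟩
      set q' := (arrowMatrix e₀).mulVec q with hq'def
      have hq' : ∀ a, 0 < q' a := mulVec_arrow_pos e₀ q hq
      set g₀ := gq S q q' with hg₀def
      have hg₀ : 0 < g₀ := gq_pos S hq hq'
      have htnew : 0 < t / g₀ := div_pos ht hg₀
      have hsub : (⋃ γ ∈ {γ ∈ G | ∃ e rest, γ.arrows = e :: rest ∧ P e}, lamSet q γ)
          ⊆ (fun h => (arrowMatrix e₀)ᵀ.mulVec h) ''
              (⋃ δ ∈ GSet S q' e₀.dst (t / g₀) n, lamSet q' δ) := by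
        intro x hx
        rw [Set.mem_iUnion₂] at hx
        obtain ⟨γ, ⟨hγG, e, rest, harr, hPe⟩, hxγ⟩ := hx
        obtain ⟨h1, h2, h3, h4, h5⟩ := hγG
        have hch : e.src = π ∧ e.Valid ∧ ChainFrom e.dst rest := by
          rw [harr] at h2; exact h2
        have he : e = e₀ := hP e e₀ hch.1 hsrc₀ hPe hP₀
        subst he
        have hγeq : lamSet q γ = lamSet q (⟨π, e :: rest⟩ : RPath A) := by
          rw [lamSet_eta q γ, h1, harr]
        rw [hγeq, lamSet_cons q π e rest] at hxγ
        refine Set.image_mono (Set.subset_biUnion_of_mem ?_) hxγ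
        refine ⟨rfl, hch.2.2, ?_, ?_, ?_⟩
        · intro arr harr'
          exact h3 arr (by rw [harr]; exact List.mem_cons_of_mem _ harr')
        · have hlen : (e :: rest).length ≤ n + 1 := by rw [← harr]; exact h4
          simpa using hlen
        · have hpm : (pathMatrix γ).mulVec q
              = (pathMatrix (⟨e.dst, rest⟩ : RPath A)).mulVec q' := by
            have h0 : pathMatrix γ = pathMatrix (⟨π, e :: rest⟩ : RPath A) := by
              rw [pathMatrix_arrows γ, harr]; rfl
            rw [h0, pathMatrix_cons π e.dst, ← Matrix.mulVec_mulVec]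
          have hmul : gq S q ((pathMatrix γ).mulVec q)
              = g₀ * gq S q' ((pathMatrix (⟨e.dst, rest⟩ : RPath A)).mulVec q') := by
            rw [hpm, hg₀def, gq_trans S q q' _ (fun a => (hq' a).ne')]
          rw [div_le_iff₀ hg₀, mul_comm]
          rw [hmul] at h5
          exact h5
      have hdetT : ((arrowMatrix e₀)ᵀ).det = 1 := by
        rw [Matrix.det_transpose]; exact det_arrowMatrix e₀ hval₀
      have hstep := vol_step S e₀ q hq
      rw [← hq'def, ← hg₀def] at hstep
      have hIH := ih q' hq' e₀.dst (t / g₀) htnew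
      calc ENNReal.ofReal t *
            volume (⋃ γ ∈ {γ ∈ G | ∃ e rest, γ.arrows = e :: rest ∧ P e}, lamSet q γ)
          ≤ ENNReal.ofReal t * volume ((fun h => (arrowMatrix e₀)ᵀ.mulVec h) ''
              (⋃ δ ∈ GSet S q' e₀.dst (t / g₀) n, lamSet q' δ)) :=
            mul_le_mul' le_rfl (measure_mono hsub)
        _ = ENNReal.ofReal t * volume (⋃ δ ∈ GSet S q' e₀.dst (t / g₀) n, lamSet q' δ) := by
            rw [vol_image _ hdetT]
        _ = ENNReal.ofReal g₀ * (ENNReal.ofReal (t / g₀) *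
              volume (⋃ δ ∈ GSet S q' e₀.dst (t / g₀) n, lamSet q' δ)) := by
            rw [← mul_assoc, ← ENNReal.ofReal_mul hg₀.le]
            congr 2
            rw [mul_comm g₀ (t / g₀), div_mul_cancel₀ t hg₀.ne']
        _ ≤ ENNReal.ofReal g₀ * volume (Lambda q') := mul_le_mul' le_rfl hIH
        _ = volume (Lambda q') * ENNReal.ofReal g₀ := mul_comm _ _
        _ = ENNReal.ofReal (if e₀.loser ∈ S then q e₀.loser / (q e₀.loser + q e₀.winner) else 1)
              * volume (Lambda q) := hstep
    have hsplit : (⋃ γ ∈ G, lamSet q γ)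
        ⊆ (⋃ γ ∈ {γ ∈ G | ∃ e rest, γ.arrows = e :: rest
              ∧ IsTopStep π e.dst e.winner e.loser}, lamSet q γ)
          ∪ (⋃ γ ∈ {γ ∈ G | ∃ e rest, γ.arrows = e :: rest
              ∧ IsBottomStep π e.dst e.winner e.loser}, lamSet q γ) := by
      intro x hx
      rw [Set.mem_iUnion₂] at hx
      obtain ⟨γ, hγ, hxγ⟩ := hx
      have hnn := gset_trivial S q hq π t ht1 (n + 1) γ hγ
      obtain ⟨e, rest, harr⟩ := List.exists_cons_of_ne_nil hnn
      have h2 : ChainFrom π γ.arrows := hγ.2.1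
      rw [harr] at h2
      have hsrc : e.src = π := h2.1
      have hval : e.Valid := h2.2.1
      rcases hval with htop | hbot
      · left
        exact Set.mem_biUnion ⟨hγ, e, rest, harr, by rwa [hsrc] at htop⟩ hxγ
      · right
        exact Set.mem_biUnion ⟨hγ, e, rest, harr, by rwa [hsrc] at hbot⟩ hxγ
    have hc_nonneg : ∀ e : Arrow A,
        0 ≤ (if e.loser ∈ S then q e.loser / (q e.loser + q e.winner) else 1) := by
      intro e
      split
      · exact (div_pos (hq _) (add_pos (hq _) (hq _))).le
      · exact zero_le_one
    have hc_le_one : ∀ e : Arrow A,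
        (if e.loser ∈ S then q e.loser / (q e.loser + q e.winner) else 1) ≤ 1 := by
      intro e
      split
      · exact (div_le_one (add_pos (hq _) (hq _))).2 (le_add_of_nonneg_right (hq _).le)
      · exact le_rfl
    have hU : ENNReal.ofReal t * volume (⋃ γ ∈ G, lamSet q γ)
        ≤ ENNReal.ofReal t * volume (⋃ γ ∈ {γ ∈ G | ∃ e rest, γ.arrows = e :: rest
              ∧ IsTopStep π e.dst e.winner e.loser}, lamSet q γ)
          + ENNReal.ofReal t * volume (⋃ γ ∈ {γ ∈ G | ∃ e rest, γ.arrows = e :: rest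
              ∧ IsBottomStep π e.dst e.winner e.loser}, lamSet q γ) := by
      calc ENNReal.ofReal t * volume (⋃ γ ∈ G, lamSet q γ)
          ≤ ENNReal.ofReal t * volume (_ ∪ _) := mul_le_mul' le_rfl (measure_mono hsplit)
        _ ≤ ENNReal.ofReal t * (volume _ + volume _) :=
            mul_le_mul' le_rfl (measure_union_le _ _)
        _ = _ := mul_add _ _ _
    have hT := branch (fun e => IsTopStep π e.dst e.winner e.loser)
      (fun e₁ e₂ h1 h2 p1 p2 => topStep_unique π e₁ e₂ h1 h2 p1 p2)
    have hB := branch (fun e => IsBottomStep π e.dst e.winner e.loser)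
      (fun e₁ e₂ h1 h2 p1 p2 => botStep_unique π e₁ e₂ h1 h2 p1 p2)
    rcases hT with hT0 | ⟨eT, hTs, hTv, hTw, hTP, hTle⟩ <;>
      rcases hB with hB0 | ⟨eB, hBs, hBv, hBw, hBP, hBle⟩
    · refine hU.trans ?_
      rw [hT0, hB0, add_zero]
      exact zero_le
    · refine hU.trans ?_
      rw [hT0, zero_add]
      refine hBle.trans ?_
      calc ENNReal.ofReal _ * volume (Lambda q) ≤ 1 * volume (Lambda q) :=
            mul_le_mul' (ENNReal.ofReal_le_one.2 (hc_le_one eB)) le_rfl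
        _ = volume (Lambda q) := one_mul _
    · refine hU.trans ?_
      rw [hB0, add_zero]
      refine hTle.trans ?_
      calc ENNReal.ofReal _ * volume (Lambda q) ≤ 1 * volume (Lambda q) :=
            mul_le_mul' (ENNReal.ofReal_le_one.2 (hc_le_one eT)) le_rfl
        _ = volume (Lambda q) := one_mul _
    · have h1 : eB.winner = eT.loser :=
        π.bot.injective (Fin.val_injective (hBP.1.trans hTP.2.1.symm))
      have h2 : eB.loser = eT.winner :=
        π.top.injective (Fin.val_injective (hBP.2.1.trans hTP.1.symm))
      have hlS : eT.loser ∈ S := h1 ▸ hBw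
      have hlS' : eB.loser ∈ S := by rw [h2]; exact hTw
      have hpos : (0:ℝ) < q eT.loser + q eT.winner := add_pos (hq _) (hq _)
      have hcsum : (if eT.loser ∈ S then q eT.loser / (q eT.loser + q eT.winner) else 1)
          + (if eB.loser ∈ S then q eB.loser / (q eB.loser + q eB.winner) else 1) = 1 := by
        rw [if_pos hlS, if_pos hlS', h2, h1]
        rw [add_comm (q eT.winner) (q eT.loser), ← add_div, div_self hpos.ne']
      refine hU.trans ?_
      calc ENNReal.ofReal t * volume (⋃ γ ∈ {γ ∈ G | ∃ e rest, γ.arrows = e :: rest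
              ∧ IsTopStep π e.dst e.winner e.loser}, lamSet q γ)
          + ENNReal.ofReal t * volume (⋃ γ ∈ {γ ∈ G | ∃ e rest, γ.arrows = e :: rest
              ∧ IsBottomStep π e.dst e.winner e.loser}, lamSet q γ)
          ≤ ENNReal.ofReal
                (if eT.loser ∈ S then q eT.loser / (q eT.loser + q eT.winner) else 1)
              * volume (Lambda q)
            + ENNReal.ofReal
                (if eB.loser ∈ S then q eB.loser / (q eB.loser + q eB.winner) else 1)
              * volume (Lambda q) := add_le_add hTle hBle
        _ = (ENNReal.ofReal
                (if eT.loser ∈ S then q eT.loser / (q eT.loser + q eT.winner) else 1)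
            + ENNReal.ofReal
                (if eB.loser ∈ S then q eB.loser / (q eB.loser + q eB.winner) else 1))
              * volume (Lambda q) := (add_mul _ _ _).symm
        _ = ENNReal.ofReal
              ((if eT.loser ∈ S then q eT.loser / (q eT.loser + q eT.winner) else 1)
              + (if eB.loser ∈ S then q eB.loser / (q eB.loser + q eB.winner) else 1))
              * volume (Lambda q) := by rw [ENNReal.ofReal_add (hc_nonneg eT) (hc_nonneg eB)]
        _ = volume (Lambda q) := by rw [hcsum, ENNReal.ofReal_one, one_mul]

end Aux

section Main
open MeasureTheory

/-- Reduction estimate: for a family `Γ` of `𝒜'`-colored paths in `Π_*(ℜ_*)` along which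
`N_{𝒜∖𝒜'}` is multiplied by at least `2^M`, the relative measure is at most `2^{-M}`. -/
theorem reduction_estimate (hd : 2 ≤ Fintype.card A)
    (R : Set (PermPair A)) (hR : IsRauzyClass R)
    (S : Finset A) (hS : S.Nonempty) (hSne : S ≠ Finset.univ)
    (Rs : Set (PermPair A)) (hRs : IsDecorated R S Rs)
    (M : ℕ) (q : A → ℝ) (hq : ∀ a, 0 < q a)
    (Γ : Set (RPath A))
    (hΓ : ∀ γ ∈ Γ, γ.IsValid R ∧ (∀ arr ∈ γ.arrows, arr.winner ∈ S) ∧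
      γ.start ∈ Rs ∧ γ.endp ∈ Rs)
    (hN : ∀ γ ∈ Γ, 2 ^ M * ∏ a ∈ Finset.univ \ S, q a
      ≤ ∏ a ∈ Finset.univ \ S, ((pathMatrix γ).mulVec q) a) :
    ∀ π ∈ Rs, famProb q {γ ∈ Γ | γ.start = π} ≤ 1 / 2 ^ M := by
  intro π hπRs
  classical
  have hq2 : (0:ℝ) < 2 ^ M := by positivity
  have key : ENNReal.ofReal ((2:ℝ) ^ M)
      * volume (⋃ γ ∈ {γ ∈ Γ | γ.start = π}, lamSet q γ) ≤ volume (Lambda q) := by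
    have hsub : (⋃ γ ∈ {γ ∈ Γ | γ.start = π}, lamSet q γ)
        ⊆ ⋃ n : ℕ, ⋃ γ ∈ GSet S q π ((2:ℝ) ^ M) n, lamSet q γ := by
      intro x hx
      rw [Set.mem_iUnion₂] at hx
      obtain ⟨γ, ⟨hγΓ, hstart⟩, hxγ⟩ := hx
      refine Set.mem_iUnion.2 ⟨γ.arrows.length, Set.mem_biUnion ?_ hxγ⟩
      obtain ⟨hval, hcol, _, _⟩ := hΓ γ hγΓ
      refine ⟨hstart, ?_, hcol, le_rfl, ?_⟩
      · have h := hval.2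
        rwa [hstart] at h
      · have hNγ := hN γ hγΓ
        have hprodq : (0:ℝ) < ∏ a ∈ Finset.univ \ S, q a :=
          Finset.prod_pos fun a _ => hq a
        have hgq : gq S q ((pathMatrix γ).mulVec q)
            = (∏ a ∈ Finset.univ \ S, (pathMatrix γ).mulVec q a)
              / ∏ a ∈ Finset.univ \ S, q a := by
          rw [gq, Finset.prod_div_distrib]
        rw [hgq, le_div_iff₀ hprodq]
        exact hNγ
    have hmono : Monotone fun n => ⋃ γ ∈ GSet S q π ((2:ℝ) ^ M) n, lamSet q γ := by
      intro m n hmn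
      refine Set.iUnion₂_subset fun γ hγ => ?_
      exact Set.subset_biUnion_of_mem
        ⟨hγ.1, hγ.2.1, hγ.2.2.1, hγ.2.2.2.1.trans hmn, hγ.2.2.2.2⟩
    calc ENNReal.ofReal ((2:ℝ) ^ M) * volume (⋃ γ ∈ {γ ∈ Γ | γ.start = π}, lamSet q γ)
        ≤ ENNReal.ofReal ((2:ℝ) ^ M)
            * volume (⋃ n : ℕ, ⋃ γ ∈ GSet S q π ((2:ℝ) ^ M) n, lamSet q γ) :=
          mul_le_mul' le_rfl (measure_mono hsub)
      _ = ENNReal.ofReal ((2:ℝ) ^ M)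
            * ⨆ n : ℕ, volume (⋃ γ ∈ GSet S q π ((2:ℝ) ^ M) n, lamSet q γ) := by
          rw [hmono.measure_iUnion]
      _ = ⨆ n : ℕ, ENNReal.ofReal ((2:ℝ) ^ M)
            * volume (⋃ γ ∈ GSet S q π ((2:ℝ) ^ M) n, lamSet q γ) := ENNReal.mul_iSup _ _
      _ ≤ volume (Lambda q) := iSup_le fun n => core S n q hq π _ hq2
  have hfin : volume (Lambda q) ≠ ⊤ := vol_Lambda_ne_top q hq
  have hUle : volume (⋃ γ ∈ {γ ∈ Γ | γ.start = π}, lamSet q γ) ≤ volume (Lambda q) :=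
    measure_mono (Set.iUnion₂_subset fun γ _ => lamSet_subset q γ)
  have hxy : (volume (⋃ p ∈ {γ ∈ Γ | γ.start = π}, lamSet q p)).toReal * 2 ^ M
      ≤ (volume (Lambda q)).toReal := by
    have h := ENNReal.toReal_mono hfin key
    rw [ENNReal.toReal_mul, ENNReal.toReal_ofReal hq2.le] at h
    linarith
  unfold famProb
  rcases eq_or_lt_of_le
      (ENNReal.toReal_nonneg : (0:ℝ) ≤ (volume (Lambda q)).toReal) with hy | hy
  · have h1 := ENNReal.toReal_mono hfin hUle
    have h2 : (0:ℝ) ≤ (volume (⋃ p ∈ {γ ∈ Γ | γ.start = π}, lamSet q p)).toReal :=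
      ENNReal.toReal_nonneg
    have hx0 : (volume (⋃ p ∈ {γ ∈ Γ | γ.start = π}, lamSet q p)).toReal = 0 := by
      linarith
    rw [hx0, zero_div]
    positivity
  · rw [div_le_div_iff₀ hy (by positivity : (0:ℝ) < 2 ^ M)]
    linarith


end Main

end Rauzy
end

section
/- (Kerckhoff's estimate.) For every T > 0, every q ∈ ℝ₊^𝒜, every α ∈ 𝒜 and every π ∈ ℜ, P_q( γ ∈ Γ_α(π) and (B_γ·q)_α > T·q_α | π ) < T^{−1}, where Γ_α(π) denotes the set of paths starting at π in which α is not the winner of any arrow. -/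
open scoped BigOperators
open Matrix

section Chunk1
namespace Rauzy
variable {A : Type} [Fintype A] [DecidableEq A]

/-- Path matrix of a list of arrows (start-independent form). -/
noncomputable def pmL (L : List (Arrow A)) : Matrix A A ℝ :=
  L.foldl (fun M a => arrowMatrix a * M) 1

lemma foldl_pm (L : List (Arrow A)) (M : Matrix A A ℝ) :
    L.foldl (fun M a => arrowMatrix a * M) M = pmL L * M := by
  induction L generalizing M with
  | nil => simp [pmL]
  | cons a L ih =>
      simp only [List.foldl_cons, pmL] at *
      rw [ih, ih (arrowMatrix a * 1), mul_one, mul_assoc]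

lemma pmL_nil : pmL ([] : List (Arrow A)) = 1 := rfl

lemma pmL_cons (a : Arrow A) (L : List (Arrow A)) :
    pmL (a :: L) = pmL L * arrowMatrix a := by
  show List.foldl _ _ _ = _
  rw [List.foldl_cons, foldl_pm, mul_one]

lemma pathMatrix_eq_pmL (p : RPath A) : pathMatrix p = pmL p.arrows := rfl

lemma arrowMatrix_apply (a : Arrow A) (x y : A) :
    arrowMatrix a x y = (if x = y then 1 else 0) + (if x = a.loser ∧ y = a.winner then 1 else 0) := by
  simp [arrowMatrix, Matrix.one_apply, Matrix.single, Matrix.add_apply, eq_comm, and_comm]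

lemma arrowMatrix_nonneg (a : Arrow A) (x y : A) : 0 ≤ arrowMatrix a x y := by
  rw [arrowMatrix_apply]; positivity

lemma arrowMatrix_diag (a : Arrow A) (x : A) : 1 ≤ arrowMatrix a x x := by
  rw [arrowMatrix_apply]; simp; positivity

lemma pmL_nonneg (L : List (Arrow A)) : (∀ x y, 0 ≤ pmL L x y) ∧ (∀ x, 1 ≤ pmL L x x) := by
  induction L with
  | nil => simp [pmL_nil, Matrix.one_apply]; intro x y; split <;> norm_num
  | cons a L ih =>
      rw [pmL_cons]
      constructor
      · intro x y
        rw [Matrix.mul_apply]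
        exact Finset.sum_nonneg fun z _ =>
          mul_nonneg (ih.1 x z) (arrowMatrix_nonneg a z y)
      · intro x
        rw [Matrix.mul_apply]
        calc (1:ℝ) = 1 * 1 := by ring
        _ ≤ pmL L x x * arrowMatrix a x x := by
            apply mul_le_mul (ih.2 x) (arrowMatrix_diag a x) (by norm_num)
            linarith [ih.2 x]
        _ ≤ ∑ z, pmL L x z * arrowMatrix a z x := by
            apply Finset.single_le_sum (f := fun z => pmL L x z * arrowMatrix a z x)
              (fun z _ => mul_nonneg (ih.1 x z) (arrowMatrix_nonneg a z x))
              (Finset.mem_univ x)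

lemma arrowMatrix_det {a : Arrow A} (h : a.loser ≠ a.winner) : (arrowMatrix a).det = 1 := by
  rw [show arrowMatrix a = Matrix.transvection a.loser a.winner 1 from rfl]
  exact Matrix.det_transvection_of_ne _ _ h 1

lemma pmL_det {L : List (Arrow A)} (h : ∀ a ∈ L, a.loser ≠ a.winner) : (pmL L).det = 1 := by
  induction L with
  | nil => simp [pmL_nil]
  | cons a L ih =>
      rw [pmL_cons, Matrix.det_mul, ih fun b hb => h b (List.mem_cons_of_mem a hb),
        arrowMatrix_det (h a (List.mem_cons_self)), one_mul]

lemma pmL_nat (L : List (Arrow A)) :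
    ∃ N : Matrix A A ℕ, pmL L = N.map (Nat.cast : ℕ → ℝ) := by
  induction L with
  | nil =>
      refine ⟨1, ?_⟩
      ext x y
      rw [pmL_nil]
      simp [Matrix.one_apply, Matrix.map_apply, apply_ite (Nat.cast : ℕ → ℝ)]
  | cons a L ih =>
      obtain ⟨N, hN⟩ := ih
      refine ⟨N * (1 + Matrix.single a.loser a.winner 1), ?_⟩
      rw [pmL_cons, hN, show (Nat.cast : ℕ → ℝ) = ⇑(Nat.castRingHom ℝ) from rfl,
        Matrix.map_mul]
      congr 1
      ext x y
      simp [arrowMatrix, Matrix.add_apply, Matrix.map_apply, Matrix.one_apply,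
        Matrix.single, apply_ite (Nat.cast : ℕ → ℝ)]

lemma arrowMatrix_mulVec_s10 (a : Arrow A) (v : A → ℝ) (x : A) :
    (arrowMatrix a *ᵥ v) x = v x + if x = a.loser then v a.winner else 0 := by
  rw [arrowMatrix, Matrix.add_mulVec, Matrix.one_mulVec]
  simp [Matrix.single_mulVec, Function.update_apply]

lemma arrowMatrix_transpose (a : Arrow A) :
    (arrowMatrix a)ᵀ = 1 + Matrix.single a.winner a.loser 1 := by
  ext x y
  simp [arrowMatrix, Matrix.transpose_apply, Matrix.add_apply, Matrix.one_apply,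
    Matrix.single, eq_comm, and_comm]

lemma arrowMatrixT_mulVec_s10 (a : Arrow A) (v : A → ℝ) (x : A) :
    ((arrowMatrix a)ᵀ *ᵥ v) x = v x + if x = a.winner then v a.loser else 0 := by
  rw [arrowMatrix_transpose, Matrix.add_mulVec, Matrix.one_mulVec]
  simp [Matrix.single_mulVec, Function.update_apply]

end Rauzy
end Chunk1

section Chunk2
namespace Rauzy
open MeasureTheory
open scoped ENNReal
variable {A : Type} [Fintype A] [DecidableEq A]

lemma lambda_subset_box {q : A → ℝ} (hq : ∀ a, 0 < q a) :
    Lambda q ⊆ Set.pi Set.univ (fun a => Set.Ioo (0:ℝ) (q a)⁻¹) := by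
  intro l hl
  obtain ⟨hpos, hsum⟩ := hl
  intro a _
  refine ⟨hpos a, ?_⟩
  have h1 : l a * q a < 1 := by
    have : l a * q a ≤ ∑ b, l b * q b := by
      apply Finset.single_le_sum (f := fun b => l b * q b)
        (fun b _ => le_of_lt (mul_pos (hpos b) (hq b))) (Finset.mem_univ a)
    linarith
  rw [← one_div]
  exact (lt_div_iff₀ (hq a)).mpr h1

lemma volume_lambda_lt_top {q : A → ℝ} (hq : ∀ a, 0 < q a) :
    volume (Lambda q) < ⊤ := by
  calc volume (Lambda q) ≤ volume (Set.pi Set.univ (fun a => Set.Ioo (0:ℝ) (q a)⁻¹)) :=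
        measure_mono (lambda_subset_box hq)
  _ = ∏ a, volume (Set.Ioo (0:ℝ) (q a)⁻¹) := volume_pi_pi _
  _ < ⊤ := by
      refine ENNReal.prod_lt_top fun a _ => ?_
      simp only [Real.volume_Ioo]
      exact ENNReal.ofReal_lt_top

lemma volume_lambda_pos {q : A → ℝ} (hq : ∀ a, 0 < q a) :
    0 < volume (Lambda q) := by
  have hd : (0:ℝ) < 1 + ∑ a, q a := by
    have : 0 ≤ ∑ a, q a := Finset.sum_nonneg fun a _ => (hq a).le
    linarith
  set ε : ℝ := (1 + ∑ a, q a)⁻¹ with hε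
  have hεpos : 0 < ε := inv_pos.mpr hd
  have hsub : Set.pi Set.univ (fun _ : A => Set.Ioo (0:ℝ) ε) ⊆ Lambda q := by
    intro l hl
    have hl' : ∀ a, 0 < l a ∧ l a < ε := fun a => hl a (Set.mem_univ a)
    refine ⟨fun a => (hl' a).1, ?_⟩
    calc ∑ a, l a * q a ≤ ∑ a, ε * q a := by
          apply Finset.sum_le_sum
          intro a _
          exact mul_le_mul_of_nonneg_right (le_of_lt (hl' a).2) (le_of_lt (hq a))
    _ = ε * ∑ a, q a := by rw [Finset.mul_sum]
    _ < ε * (1 + ∑ a, q a) := by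
          apply mul_lt_mul_of_pos_left _ hεpos
          linarith
    _ = 1 := inv_mul_cancel₀ (ne_of_gt hd)
  calc (0:ℝ≥0∞) < ∏ _a : A, volume (Set.Ioo (0:ℝ) ε) := by
        rw [CanonicallyOrderedAdd.prod_pos]
        intro a _
        simp [Real.volume_Ioo, hεpos]
  _ = volume (Set.pi Set.univ (fun _ : A => Set.Ioo (0:ℝ) ε)) := (volume_pi_pi _).symm
  _ ≤ volume (Lambda q) := measure_mono hsub

lemma volume_image_mulVec {M : Matrix A A ℝ} (s : Set (A → ℝ)) :
    volume ((fun v => M *ᵥ v) '' s) = ENNReal.ofReal |M.det| * volume s := by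
  rw [show (fun v => M *ᵥ v) = ⇑(Matrix.toLin' M) from rfl,
    Measure.addHaar_image_linearMap, LinearMap.det_toLin']

lemma volume_image_mulVec_det_one {M : Matrix A A ℝ} (h : M.det = 1) (s : Set (A → ℝ)) :
    volume ((fun v => M *ᵥ v) '' s) = volume s := by
  rw [volume_image_mulVec, h]
  simp

lemma diagonal_image_lambda {q1 q2 : A → ℝ} (h1 : ∀ a, 0 < q1 a) (h2 : ∀ a, 0 < q2 a) :
    (fun v => (Matrix.diagonal (fun a => q1 a / q2 a)) *ᵥ v) '' Lambda q1 = Lambda q2 := by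
  ext l'
  constructor
  · rintro ⟨l, ⟨hpos, hsum⟩, rfl⟩
    constructor
    · intro a
      simp only [Matrix.mulVec_diagonal]
      exact mul_pos (div_pos (h1 a) (h2 a)) (hpos a)
    · calc ∑ a, (Matrix.diagonal (fun a => q1 a / q2 a) *ᵥ l) a * q2 a
          = ∑ a, l a * q1 a := by
            apply Finset.sum_congr rfl
            intro a _
            simp only [Matrix.mulVec_diagonal]
            have hq2 : q2 a ≠ 0 := ne_of_gt (h2 a)
            field_simp
      _ < 1 := hsum
  · rintro ⟨hpos, hsum⟩
    refine ⟨fun a => l' a * q2 a / q1 a, ⟨?_, ?_⟩, ?_⟩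
    · intro a
      exact div_pos (mul_pos (hpos a) (h2 a)) (h1 a)
    · calc ∑ a, l' a * q2 a / q1 a * q1 a = ∑ a, l' a * q2 a := by
            apply Finset.sum_congr rfl
            intro a _
            have hq1 : q1 a ≠ 0 := ne_of_gt (h1 a)
            field_simp
      _ < 1 := hsum
    · funext a
      simp only [Matrix.mulVec_diagonal]
      have hq1 : q1 a ≠ 0 := ne_of_gt (h1 a)
      have hq2 : q2 a ≠ 0 := ne_of_gt (h2 a)
      field_simp

lemma volume_lambda_ratio {q1 q2 : A → ℝ} (h1 : ∀ a, 0 < q1 a) (h2 : ∀ a, 0 < q2 a) :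
    volume (Lambda q2) = ENNReal.ofReal (∏ a, q1 a / q2 a) * volume (Lambda q1) := by
  rw [← diagonal_image_lambda h1 h2, volume_image_mulVec, Matrix.det_diagonal,
    abs_of_pos (Finset.prod_pos fun a _ => div_pos (h1 a) (h2 a))]

end Rauzy
end Chunk2

section Chunk3
namespace Rauzy
open MeasureTheory
open scoped ENNReal
variable {A : Type} [Fintype A] [DecidableEq A]

lemma permPair_ext_s10 {p q : PermPair A} (ht : p.top = q.top) (hb : p.bot = q.bot) : p = q := by
  cases p; cases q; cases ht; cases hb; rfl

lemma step_winner_ne_loser (hcard : 2 ≤ Fintype.card A) {π' π'' : PermPair A} {w l : A}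
    (hirr : Irreducible π') (h : IsStep π' π'' w l) : w ≠ l := by
  intro hwl
  subst hwl
  have key : ∀ f : A ≃ Fin (Fintype.card A), (f w : ℕ) = Fintype.card A - 1 →
      {a : A | (f a : ℕ) < Fintype.card A - 1} = {a : A | a ≠ w} := by
    intro f hf
    ext a
    simp only [Set.mem_setOf_eq]
    constructor
    · intro hlt hae; rw [hae, hf] at hlt; omega
    · intro hne
      have h1 : (f a : ℕ) < Fintype.card A := (f a).isLt
      have h2 : (f a : ℕ) ≠ Fintype.card A - 1 := by
        intro he
        exact hne (f.injective (Fin.val_injective (he.trans hf.symm)))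
      omega
  have hmain := hirr (Fintype.card A - 1) (by omega) (by omega)
  rcases h with ⟨h1, h2, _⟩ | ⟨h1, h2, _⟩
  · exact hmain ((key π'.top h1).trans (key π'.bot h2).symm)
  · exact hmain ((key π'.top h2).trans (key π'.bot h1).symm)

lemma isTopStep_unique {π' d1 d2 : PermPair A} {w1 l1 w2 l2 : A}
    (h1 : IsTopStep π' d1 w1 l1) (h2 : IsTopStep π' d2 w2 l2) :
    w1 = w2 ∧ l1 = l2 ∧ d1 = d2 := by
  obtain ⟨hw1, hl1, ht1, hb1, hb1'⟩ := h1
  obtain ⟨hw2, hl2, ht2, hb2, hb2'⟩ := h2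
  have hw : w1 = w2 := π'.top.injective (Fin.val_injective (hw1.trans hw2.symm))
  have hl : l1 = l2 := π'.bot.injective (Fin.val_injective (hl1.trans hl2.symm))
  subst hw; subst hl
  refine ⟨rfl, rfl, permPair_ext_s10 (ht1.trans ht2.symm) ?_⟩
  apply Equiv.ext
  intro ξ
  apply Fin.val_injective
  by_cases hξ : ξ = l1
  · subst hξ; rw [hb1, hb2]
  · rw [hb1' ξ hξ, hb2' ξ hξ]

lemma isBottomStep_unique {π' d1 d2 : PermPair A} {w1 l1 w2 l2 : A}
    (h1 : IsBottomStep π' d1 w1 l1) (h2 : IsBottomStep π' d2 w2 l2) :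
    w1 = w2 ∧ l1 = l2 ∧ d1 = d2 := by
  obtain ⟨hw1, hl1, ht1, hb1, hb1'⟩ := h1
  obtain ⟨hw2, hl2, ht2, hb2, hb2'⟩ := h2
  have hw : w1 = w2 := π'.bot.injective (Fin.val_injective (hw1.trans hw2.symm))
  have hl : l1 = l2 := π'.top.injective (Fin.val_injective (hl1.trans hl2.symm))
  subst hw; subst hl
  refine ⟨rfl, rfl, permPair_ext_s10 ?_ (ht1.trans ht2.symm)⟩
  apply Equiv.ext
  intro ξ
  apply Fin.val_injective
  by_cases hξ : ξ = l1
  · subst hξ; rw [hb1, hb2]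
  · rw [hb1' ξ hξ, hb2' ξ hξ]

lemma top_arrow_eq {π' : PermPair A} {a1 a2 : Arrow A}
    (s1 : a1.src = π') (s2 : a2.src = π')
    (h1 : IsTopStep π' a1.dst a1.winner a1.loser)
    (h2 : IsTopStep π' a2.dst a2.winner a2.loser) : a1 = a2 := by
  obtain ⟨hw, hl, hd⟩ := isTopStep_unique h1 h2
  cases a1; cases a2
  simp_all

lemma bot_arrow_eq {π' : PermPair A} {a1 a2 : Arrow A}
    (s1 : a1.src = π') (s2 : a2.src = π')
    (h1 : IsBottomStep π' a1.dst a1.winner a1.loser)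
    (h2 : IsBottomStep π' a2.dst a2.winner a2.loser) : a1 = a2 := by
  obtain ⟨hw, hl, hd⟩ := isBottomStep_unique h1 h2
  cases a1; cases a2
  simp_all

lemma top_bot_rel {π' t b : PermPair A} {wt lt wb lb : A}
    (h1 : IsTopStep π' t wt lt) (h2 : IsBottomStep π' b wb lb) :
    wt = lb ∧ lt = wb :=
  ⟨π'.top.injective (Fin.val_injective (h1.1.trans h2.2.1.symm)),
   π'.bot.injective (Fin.val_injective (h1.2.1.trans h2.1.symm))⟩

/-- The union of the sets `Λ_{q',γ}` over paths of length at most `n` starting at `π'`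
in which `α` never wins and whose matrix pushes the `α`-coordinate of `q'` above `C`. -/
def Sset (C : ℝ) (α : A) (n : ℕ) (π' : PermPair A) (q' : A → ℝ) : Set (A → ℝ) :=
  ⋃ (L : List (Arrow A)) (_ : ChainFrom π' L ∧ L.length ≤ n ∧
      (∀ arr ∈ L, arr.winner ≠ α) ∧ C < (pmL L *ᵥ q') α),
    (fun v => (pmL L)ᵀ *ᵥ v) '' Lambda (pmL L *ᵥ q')

lemma sset_mono {C : ℝ} {α : A} {π' : PermPair A} {q' : A → ℝ} :
    Monotone (fun n => Sset C α n π' q') := by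
  intro n m hnm
  apply Set.iUnion_mono
  intro L
  apply Set.iUnion_subset
  intro ⟨hc, hlen, hw, hcr⟩
  exact Set.subset_iUnion_of_subset ⟨hc, hlen.trans hnm, hw, hcr⟩ subset_rfl

lemma lam_term_subset {q' : A → ℝ} (hq' : ∀ a, 0 < q' a) (L : List (Arrow A)) :
    (fun v => (pmL L)ᵀ *ᵥ v) '' Lambda (pmL L *ᵥ q') ⊆ Lambda q' := by
  rintro _ ⟨μ, ⟨hμpos, hμsum⟩, rfl⟩
  constructor
  · intro x
    have h1 : ((pmL L)ᵀ *ᵥ μ) x = ∑ y, pmL L y x * μ y := by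
      simp [Matrix.mulVec, dotProduct, Matrix.transpose_apply]
    have h2 : pmL L x x * μ x ≤ ∑ y, pmL L y x * μ y :=
      Finset.single_le_sum (f := fun y => pmL L y x * μ y)
        (fun y _ => mul_nonneg ((pmL_nonneg L).1 y x) (hμpos y).le) (Finset.mem_univ x)
    have h3 := (pmL_nonneg L).2 x
    have h4 := hμpos x
    show 0 < ((pmL L)ᵀ *ᵥ μ) x
    rw [h1]
    nlinarith
  · have key : ∑ a, ((pmL L)ᵀ *ᵥ μ) a * q' a = ∑ a, μ a * (pmL L *ᵥ q') a := by
      rw [show ∑ a, ((pmL L)ᵀ *ᵥ μ) a * q' a = ((pmL L)ᵀ *ᵥ μ) ⬝ᵥ q' from rfl,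
        Matrix.mulVec_transpose, ← dotProduct_mulVec]
      rfl
    rw [key]
    exact hμsum

lemma sset_subset_lambda {C : ℝ} {α : A} {n : ℕ} {π' : PermPair A} {q' : A → ℝ}
    (hq' : ∀ a, 0 < q' a) : Sset C α n π' q' ⊆ Lambda q' := by
  apply Set.iUnion_subset
  intro L
  apply Set.iUnion_subset
  intro _
  exact lam_term_subset hq' L

lemma arrow_mulVec_pos {a : Arrow A} {q' : A → ℝ} (hq' : ∀ x, 0 < q' x) (x : A) :
    0 < (arrowMatrix a *ᵥ q') x := by
  rw [arrowMatrix_mulVec_s10]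
  have := hq' x
  have := hq' a.winner
  split <;> linarith

end Rauzy
end Chunk3

section Chunk4
namespace Rauzy
open MeasureTheory
open scoped ENNReal
variable {A : Type} [Fintype A] [DecidableEq A]

lemma sset_succ_subset {C : ℝ} {α : A} {n : ℕ} {π' : PermPair A} {q' : A → ℝ}
    (hqC : q' α ≤ C) :
    Sset C α (n+1) π' q' ⊆
      (⋃ (a : Arrow A) (_ : a.src = π' ∧ IsTopStep π' a.dst a.winner a.loser ∧ a.winner ≠ α),
        (fun v => (arrowMatrix a)ᵀ *ᵥ v) '' Sset C α n a.dst (arrowMatrix a *ᵥ q')) ∪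
      (⋃ (a : Arrow A) (_ : a.src = π' ∧ IsBottomStep π' a.dst a.winner a.loser ∧ a.winner ≠ α),
        (fun v => (arrowMatrix a)ᵀ *ᵥ v) '' Sset C α n a.dst (arrowMatrix a *ᵥ q')) := by
  intro lam hlam
  simp only [Sset, Set.mem_iUnion] at hlam
  obtain ⟨L, ⟨hc, hlen, hwin, hcr⟩, hmem⟩ := hlam
  match L with
  | [] =>
      exfalso
      rw [pmL_nil, Matrix.one_mulVec] at hcr
      linarith
  | a :: L' =>
      obtain ⟨hsrc, hval, hchain⟩ := hc
      have hpm : pmL (a :: L') = pmL L' * arrowMatrix a := pmL_cons a L'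
      have hv : pmL (a :: L') *ᵥ q' = pmL L' *ᵥ (arrowMatrix a *ᵥ q') := by
        rw [hpm, ← Matrix.mulVec_mulVec]
      have himg : (fun v => (pmL (a :: L'))ᵀ *ᵥ v) '' Lambda (pmL (a :: L') *ᵥ q')
          = (fun v => (arrowMatrix a)ᵀ *ᵥ v) ''
            ((fun v => (pmL L')ᵀ *ᵥ v) '' Lambda (pmL L' *ᵥ (arrowMatrix a *ᵥ q'))) := by
        rw [Set.image_image, hv]
        apply Set.image_congr
        intro v _
        rw [hpm, Matrix.transpose_mul, ← Matrix.mulVec_mulVec]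
      rw [himg] at hmem
      have hsub : (fun v => (pmL L')ᵀ *ᵥ v) '' Lambda (pmL L' *ᵥ (arrowMatrix a *ᵥ q'))
          ⊆ Sset C α n a.dst (arrowMatrix a *ᵥ q') := by
        intro v hv2
        refine Set.mem_iUnion.mpr ⟨L', Set.mem_iUnion.mpr ⟨⟨hchain, ?_, ?_, ?_⟩, hv2⟩⟩
        · simp only [List.length_cons] at hlen; omega
        · intro arr harr; exact hwin arr (List.mem_cons_of_mem a harr)
        · exact hv ▸ hcr
      have hmem' : lam ∈ (fun v => (arrowMatrix a)ᵀ *ᵥ v) '' Sset C α n a.dst (arrowMatrix a *ᵥ q') :=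
        Set.image_mono hsub hmem
      have hwa : a.winner ≠ α := hwin a (List.mem_cons_self)
      rcases hval with htop | hbot
      · left
        refine Set.mem_iUnion.mpr ⟨a, Set.mem_iUnion.mpr ⟨⟨hsrc, ?_, hwa⟩, hmem'⟩⟩
        rw [← hsrc]; exact htop
      · right
        refine Set.mem_iUnion.mpr ⟨a, Set.mem_iUnion.mpr ⟨⟨hsrc, ?_, hwa⟩, hmem'⟩⟩
        rw [← hsrc]; exact hbot

lemma iUnion_arrow_collapse {P : Arrow A → Prop} (huniq : ∀ a1 a2, P a1 → P a2 → a1 = a2)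
    {a₀ : Arrow A} (ha₀ : P a₀) (f : Arrow A → Set (A → ℝ)) :
    (⋃ (a : Arrow A) (_ : P a), f a) = f a₀ := by
  apply subset_antisymm
  · apply Set.iUnion_subset
    intro a
    apply Set.iUnion_subset
    intro ha
    rw [huniq a a₀ ha ha₀]
  · exact Set.subset_iUnion₂ (s := fun a _ => f a) a₀ ha₀

lemma iUnion_arrow_empty {P : Arrow A → Prop} (h : ¬ ∃ a, P a) (f : Arrow A → Set (A → ℝ)) :
    (⋃ (a : Arrow A) (_ : P a), f a) = ∅ := by
  apply Set.eq_empty_of_subset_empty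
  apply Set.iUnion_subset
  intro a
  apply Set.iUnion_subset
  intro ha
  exact absurd ⟨a, ha⟩ h

lemma branch_bound (hcard : 2 ≤ Fintype.card A) {R : Set (PermPair A)} (hR : IsRauzyClass R)
    {C : ℝ} (hC : 0 < C) {α : A} {n : ℕ} {π' : PermPair A} (hπ' : π' ∈ R)
    {q' : A → ℝ} (hq' : ∀ x, 0 < q' x) (hqC : q' α ≤ C)
    (IH : ∀ π'' ∈ R, ∀ q'' : A → ℝ, (∀ x, 0 < q'' x) → q'' α ≤ C →
      volume (Sset C α n π'' q'') ≤ ENNReal.ofReal (q'' α / C) * volume (Lambda q''))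
    {a : Arrow A} (hsrc : a.src = π') (hstep : IsStep π' a.dst a.winner a.loser)
    (hwα : a.winner ≠ α) :
    volume ((fun v => (arrowMatrix a)ᵀ *ᵥ v) '' Sset C α n a.dst (arrowMatrix a *ᵥ q'))
      ≤ ENNReal.ofReal (q' α / C) *
        ENNReal.ofReal (if a.loser = α then 1 else q' a.loser / (q' a.loser + q' a.winner)) *
        volume (Lambda q') := by
  have hirr : Irreducible π' := hR.2.1 π' hπ'
  have hwl : a.winner ≠ a.loser := step_winner_ne_loser hcard hirr hstep
  have hdst : a.dst ∈ R := hR.2.2.1 π' hπ' a.dst a.winner a.loser hstep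
  set q'' := arrowMatrix a *ᵥ q' with hq''def
  have hq'' : ∀ x, 0 < q'' x := arrow_mulVec_pos hq'
  have hdet : ((arrowMatrix a)ᵀ).det = 1 := by
    rw [Matrix.det_transpose]
    exact arrowMatrix_det (Ne.symm hwl)
  rw [volume_image_mulVec_det_one hdet]
  have hql : q'' a.loser = q' a.loser + q' a.winner := by
    rw [hq''def]; show (arrowMatrix a *ᵥ q') a.loser = _
    rw [arrowMatrix_mulVec_s10]; simp
  have hqo : ∀ x, x ≠ a.loser → q'' x = q' x := by
    intro x hx
    rw [hq''def]; show (arrowMatrix a *ᵥ q') x = _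
    rw [arrowMatrix_mulVec_s10]; simp [hx]
  have hsum_pos : 0 < q' a.loser + q' a.winner := by
    have := hq' a.loser; have := hq' a.winner; linarith
  have hprod : (∏ x, q' x / q'' x) = q' a.loser / (q' a.loser + q' a.winner) := by
    rw [Finset.prod_eq_single a.loser]
    · rw [hql]
    · intro x _ hx
      rw [hqo x hx, div_self (ne_of_gt (hq' x))]
    · intro hx; exact absurd (Finset.mem_univ _) hx
  have hratio : volume (Lambda q'')
      = ENNReal.ofReal (q' a.loser / (q' a.loser + q' a.winner)) * volume (Lambda q') := by
    rw [volume_lambda_ratio hq' hq'', hprod]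
  by_cases hl : a.loser = α
  · rw [if_pos hl]
    rw [ENNReal.ofReal_one, mul_one]
    have hqlα : q'' α = q' α + q' a.winner := by rw [← hl, hql, hl]
    have hq'α_pos := hq' α
    have hw_pos := hq' a.winner
    by_cases hcase : q'' α ≤ C
    · calc volume (Sset C α n a.dst q'') ≤ ENNReal.ofReal (q'' α / C) * volume (Lambda q'') :=
            IH a.dst hdst q'' hq'' hcase
      _ = ENNReal.ofReal (q'' α / C) * (ENNReal.ofReal (q' α / q'' α) * volume (Lambda q')) := by
            rw [hratio, hl, ← hqlα]  -- ratio with loser = α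
      _ = ENNReal.ofReal (q'' α / C * (q' α / q'' α)) * volume (Lambda q') := by
            rw [← mul_assoc, ← ENNReal.ofReal_mul (div_nonneg (by rw [hqlα]; linarith) hC.le)]
      _ = ENNReal.ofReal (q' α / C) * volume (Lambda q') := by
            have h1 : q'' α ≠ 0 := ne_of_gt (by rw [hqlα]; linarith)
            have h3 : q'' α / C * (q' α / q'' α) = q' α / C := by
              field_simp
            rw [h3]
    · push_neg at hcase
      calc volume (Sset C α n a.dst q'') ≤ volume (Lambda q'') :=
            measure_mono (sset_subset_lambda hq'')
      _ = ENNReal.ofReal (q' α / q'' α) * volume (Lambda q') := by rw [hratio, hl, ← hqlα]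
      _ ≤ ENNReal.ofReal (q' α / C) * volume (Lambda q') := by
            apply mul_le_mul_left
            apply ENNReal.ofReal_le_ofReal
            apply div_le_div_of_nonneg_left (hq' α).le hC hcase.le
  · rw [if_neg hl]
    have hq''α : q'' α = q' α := hqo α (fun h => hl (h ▸ rfl))
    calc volume (Sset C α n a.dst q'') ≤ ENNReal.ofReal (q'' α / C) * volume (Lambda q'') :=
          IH a.dst hdst q'' hq'' (by rw [hq''α]; exact hqC)
    _ = ENNReal.ofReal (q' α / C) *
          ENNReal.ofReal (q' a.loser / (q' a.loser + q' a.winner)) * volume (Lambda q') := by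
          rw [hratio, hq''α, mul_assoc]

end Rauzy
end Chunk4

section Chunk5
namespace Rauzy
open MeasureTheory
open scoped ENNReal
variable {A : Type} [Fintype A] [DecidableEq A]

lemma sset_bound (hcard : 2 ≤ Fintype.card A) {R : Set (PermPair A)} (hR : IsRauzyClass R)
    {C : ℝ} (hC : 0 < C) (α : A) :
    ∀ n : ℕ, ∀ π' ∈ R, ∀ q' : A → ℝ, (∀ x, 0 < q' x) → q' α ≤ C →
      volume (Sset C α n π' q') ≤ ENNReal.ofReal (q' α / C) * volume (Lambda q') := by
  intro n
  induction n with
  | zero =>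
      intro π' hπ' q' hq' hqC
      have hempty : Sset C α 0 π' q' = ∅ := by
        apply Set.eq_empty_of_subset_empty
        apply Set.iUnion_subset
        intro L
        apply Set.iUnion_subset
        rintro ⟨hc, hlen, hw, hcr⟩
        exfalso
        have : L = [] := List.length_eq_zero_iff.mp (Nat.le_zero.mp hlen)
        subst this
        rw [pmL_nil, Matrix.one_mulVec] at hcr
        linarith
      rw [hempty, measure_empty]
      exact zero_le
  | succ n IH =>
      intro π' hπ' q' hq' hqC
      set Pt : Arrow A → Prop :=
        fun a => a.src = π' ∧ IsTopStep π' a.dst a.winner a.loser ∧ a.winner ≠ α with hPt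
      set Pb : Arrow A → Prop :=
        fun a => a.src = π' ∧ IsBottomStep π' a.dst a.winner a.loser ∧ a.winner ≠ α with hPb
      set f : Arrow A → Set (A → ℝ) :=
        fun a => (fun v => (arrowMatrix a)ᵀ *ᵥ v) '' Sset C α n a.dst (arrowMatrix a *ᵥ q')
        with hf
      have hcov := sset_succ_subset (n := n) (π' := π') hqC
      refine le_trans (measure_mono hcov) (le_trans (measure_union_le _ _) ?_)
      have huniq_t : ∀ a1 a2, Pt a1 → Pt a2 → a1 = a2 := by
        intro a1 a2 h1 h2
        exact top_arrow_eq h1.1 h2.1 h1.2.1 h2.2.1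
      have huniq_b : ∀ a1 a2, Pb a1 → Pb a2 → a1 = a2 := by
        intro a1 a2 h1 h2
        exact bot_arrow_eq h1.1 h2.1 h1.2.1 h2.2.1
      have hbb : ∀ a : Arrow A, a.src = π' → IsStep π' a.dst a.winner a.loser → a.winner ≠ α →
          volume (f a) ≤ ENNReal.ofReal (q' α / C) *
            ENNReal.ofReal (if a.loser = α then 1 else q' a.loser / (q' a.loser + q' a.winner)) *
            volume (Lambda q') := by
        intro a h1 h2 h3
        exact branch_bound hcard hR hC hπ' hq' hqC IH h1 h2 h3
      -- the coarse bound for a single branch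
      have hcoarse : ∀ a : Arrow A, a.src = π' → IsStep π' a.dst a.winner a.loser →
          a.winner ≠ α →
          volume (f a) ≤ ENNReal.ofReal (q' α / C) * volume (Lambda q') := by
        intro a h1 h2 h3
        refine le_trans (hbb a h1 h2 h3) ?_
        rw [mul_assoc]
        apply mul_le_mul_right
        have hle1 : ENNReal.ofReal
            (if a.loser = α then 1 else q' a.loser / (q' a.loser + q' a.winner)) ≤ 1 := by
          apply ENNReal.ofReal_le_one.mpr
          split
          · exact le_refl 1
          · apply div_le_one_of_le₀
            · have := hq' a.winner; linarith
            · have := hq' a.loser; have := hq' a.winner; linarith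
        calc ENNReal.ofReal (if a.loser = α then 1 else q' a.loser / (q' a.loser + q' a.winner)) *
              volume (Lambda q') ≤ 1 * volume (Lambda q') := mul_le_mul_left hle1 _
        _ = volume (Lambda q') := one_mul _
      by_cases hex_t : ∃ a, Pt a
      · by_cases hex_b : ∃ a, Pb a
        · -- both branches present
          obtain ⟨at0, hat⟩ := hex_t
          obtain ⟨ab0, hab⟩ := hex_b
          rw [iUnion_arrow_collapse huniq_t hat f, iUnion_arrow_collapse huniq_b hab f]
          have hrel := top_bot_rel hat.2.1 hab.2.1
          -- at0.winner = ab0.loser, at0.loser = ab0.winner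
          have hlt_ne : at0.loser ≠ α := by rw [hrel.2]; exact hab.2.2
          have hlb_ne : ab0.loser ≠ α := by rw [← hrel.1]; exact hat.2.2
          have hbt := hbb at0 hat.1 (Or.inl hat.2.1) hat.2.2
          have hbbt := hbb ab0 hab.1 (Or.inr hab.2.1) hab.2.2
          rw [if_neg hlt_ne] at hbt
          rw [if_neg hlb_ne] at hbbt
          rw [← hrel.1, ← hrel.2] at hbbt
          have hu := hq' at0.loser
          have hw := hq' at0.winner
          have keyr : q' at0.loser / (q' at0.loser + q' at0.winner) +
              q' at0.winner / (q' at0.winner + q' at0.loser) = 1 := by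
            have h1 : q' at0.loser + q' at0.winner ≠ 0 := by positivity
            have h2 : q' at0.winner + q' at0.loser ≠ 0 := by positivity
            field_simp
            ring
          have key : ENNReal.ofReal (q' at0.loser / (q' at0.loser + q' at0.winner)) +
              ENNReal.ofReal (q' at0.winner / (q' at0.winner + q' at0.loser)) = 1 := by
            rw [← ENNReal.ofReal_add (by positivity) (by positivity), keyr, ENNReal.ofReal_one]
          calc volume (f at0) + volume (f ab0)
              ≤ ENNReal.ofReal (q' α / C) *
                  ENNReal.ofReal (q' at0.loser / (q' at0.loser + q' at0.winner)) *
                  volume (Lambda q') +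
                ENNReal.ofReal (q' α / C) *
                  ENNReal.ofReal (q' at0.winner / (q' at0.winner + q' at0.loser)) *
                  volume (Lambda q') := add_le_add hbt hbbt
          _ = ENNReal.ofReal (q' α / C) *
                (ENNReal.ofReal (q' at0.loser / (q' at0.loser + q' at0.winner)) +
                 ENNReal.ofReal (q' at0.winner / (q' at0.winner + q' at0.loser))) *
                volume (Lambda q') := by ring
          _ = ENNReal.ofReal (q' α / C) * volume (Lambda q') := by rw [key, mul_one]
        · -- only top
          obtain ⟨at0, hat⟩ := hex_t
          rw [iUnion_arrow_collapse huniq_t hat f, iUnion_arrow_empty hex_b f, measure_empty,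
            add_zero]
          exact hcoarse at0 hat.1 (Or.inl hat.2.1) hat.2.2
      · by_cases hex_b : ∃ a, Pb a
        · obtain ⟨ab0, hab⟩ := hex_b
          rw [iUnion_arrow_collapse huniq_b hab f, iUnion_arrow_empty hex_t f, measure_empty,
            zero_add]
          exact hcoarse ab0 hab.1 (Or.inr hab.2.1) hab.2.2
        · rw [iUnion_arrow_empty hex_t f, iUnion_arrow_empty hex_b f, measure_empty, add_zero]
          exact zero_le

end Rauzy
end Chunk5

section Chunk6
namespace Rauzy
open MeasureTheory
open scoped ENNReal
variable {A : Type} [Fintype A] [DecidableEq A]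

lemma value_representable (L : List (Arrow A)) (q : A → ℝ) (α : A) :
    ∃ c : A → ℕ, (pmL L *ᵥ q) α = ∑ a, (c a : ℝ) * q a := by
  obtain ⟨N, hN⟩ := pmL_nat L
  refine ⟨N α, ?_⟩
  rw [hN]
  simp [Matrix.mulVec, dotProduct, Matrix.map_apply]

lemma exists_T2 {q : A → ℝ} (hq : ∀ a, 0 < q a) (α : A) {T : ℝ} (hT : 0 < T)
    {v₀ : ℝ} (hrep : ∃ c : A → ℕ, v₀ = ∑ a, (c a : ℝ) * q a) (hv₀ : T * q α < v₀) :
    ∃ T2 : ℝ, T < T2 ∧ ∀ v : ℝ, (∃ c : A → ℕ, v = ∑ a, (c a : ℝ) * q a) →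
      (T * q α < v ↔ T2 * q α < v) := by
  classical
  set Nm : ℕ := Finset.univ.sup (fun a => ⌈v₀ / q a⌉₊) with hNm
  set F : Finset ℝ :=
    Finset.image (fun c : A → Fin (Nm+1) => ∑ a, ((c a : ℕ) : ℝ) * q a) Finset.univ with hF
  set G : Finset ℝ := F.filter (fun v => T * q α < v) with hG
  have hmemG : ∀ v : ℝ, (∃ c : A → ℕ, v = ∑ a, (c a : ℝ) * q a) →
      T * q α < v → v ≤ v₀ → v ∈ G := by
    rintro v ⟨c, rfl⟩ hv hvv₀
    refine Finset.mem_filter.mpr ⟨?_, hv⟩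
    apply Finset.mem_image.mpr
    have hca : ∀ a, c a < Nm + 1 := by
      intro a
      have h1 : (c a : ℝ) * q a ≤ ∑ b, (c b : ℝ) * q b :=
        Finset.single_le_sum (f := fun b => ((c b : ℝ) * q b))
          (fun b _ => mul_nonneg (Nat.cast_nonneg _) (hq b).le) (Finset.mem_univ a)
      have h2 : (c a : ℝ) ≤ v₀ / q a := by
        rw [le_div_iff₀ (hq a)]
        linarith
      have h3 : (c a : ℕ) ≤ ⌈v₀ / q a⌉₊ := by
        have h4 := Nat.le_ceil (v₀ / q a)
        exact_mod_cast h2.trans h4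
      have h5 : ⌈v₀ / q a⌉₊ ≤ Nm := Finset.le_sup (f := fun a => ⌈v₀ / q a⌉₊) (Finset.mem_univ a)
      omega
    exact ⟨fun a => ⟨c a, hca a⟩, Finset.mem_univ _, rfl⟩
  have hGne : G.Nonempty := ⟨v₀, hmemG v₀ hrep hv₀ le_rfl⟩
  set vmin := G.min' hGne with hvmin
  have hmin_gt : T * q α < vmin := (Finset.mem_filter.mp (G.min'_mem hGne)).2
  have hmin_le : ∀ v, (∃ c : A → ℕ, v = ∑ a, (c a : ℝ) * q a) → T * q α < v → vmin ≤ v := by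
    intro v hr hv
    rcases le_or_gt v v₀ with h | h
    · exact G.min'_le v (hmemG v hr hv h)
    · exact le_trans (G.min'_le v₀ (hmemG v₀ hrep hv₀ le_rfl)) h.le
  refine ⟨(T * q α + vmin) / (2 * q α), ?_, ?_⟩
  · rw [lt_div_iff₀ (by have := hq α; linarith)]
    nlinarith [hq α]
  · intro v hr
    have hqα : q α ≠ 0 := ne_of_gt (hq α)
    have hkey : (T * q α + vmin) / (2 * q α) * q α = (T * q α + vmin) / 2 := by
      field_simp
    rw [hkey]
    constructor
    · intro hv
      have := hmin_le v hr hv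
      linarith
    · intro hv
      linarith

end Rauzy
end Chunk6


namespace Rauzy

variable {A : Type} [Fintype A] [DecidableEq A]

/-- Kerckhoff's estimate: along paths where `α` never wins, the coordinate `q_α`
is multiplied by more than `T` with probability less than `T⁻¹`. -/
theorem kerckhoff_estimate (hd : 2 ≤ Fintype.card A)
    (R : Set (PermPair A)) (hR : IsRauzyClass R)
    (T : ℝ) (hT : 0 < T) (q : A → ℝ) (hq : ∀ a, 0 < q a)
    (α : A) (π : PermPair A) (hπ : π ∈ R) :
    pathProb R q π (fun γ =>
        (∀ arr ∈ γ.arrows, arr.winner ≠ α) ∧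
        T * q α < ((pathMatrix γ).mulVec q) α)
      < T⁻¹ := by
  classical
  have hΛpos := volume_lambda_pos hq
  have hΛfin := volume_lambda_lt_top hq
  have hΛtR : 0 < (MeasureTheory.volume (Lambda q)).toReal :=
    ENNReal.toReal_pos (ne_of_gt hΛpos) hΛfin.ne
  unfold pathProb famProb
  set Γ : Set (RPath A) := {p : RPath A | p.IsValid R ∧ p.start = π ∧
    (∀ arr ∈ p.arrows, arr.winner ≠ α) ∧
    T * q α < ((pathMatrix p).mulVec q) α} with hΓ
  set U : Set (A → ℝ) := ⋃ p ∈ Γ, lamSet q p with hU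
  have hUΛ : U ⊆ Lambda q := by
    apply Set.iUnion₂_subset
    intro p _
    exact lam_term_subset hq p.arrows
  rcases lt_or_ge T 1 with hT1 | hT1
  · -- easy case T < 1
    have h1 : (MeasureTheory.volume U).toReal / (MeasureTheory.volume (Lambda q)).toReal ≤ 1 :=
      (div_le_one hΛtR).mpr (ENNReal.toReal_mono hΛfin.ne (MeasureTheory.measure_mono hUΛ))
    have h2 : 1 < T⁻¹ := by
      rw [← inv_one]
      exact inv_strictAnti₀ hT hT1
    exact lt_of_le_of_lt h1 h2
  · rcases Set.eq_empty_or_nonempty Γ with hΓe | hΓne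
    · have : U = ∅ := by rw [hU, hΓe]; simp
      rw [this]
      simp only [MeasureTheory.measure_empty, ENNReal.toReal_zero, zero_div]
      exact inv_pos.mpr hT
    · obtain ⟨γ₀, hγ₀⟩ := hΓne
      have hγ₀' := hγ₀
      rw [hΓ, Set.mem_setOf_eq] at hγ₀'
      obtain ⟨T2, hTT2, hiff⟩ :=
        exists_T2 hq α hT (value_representable γ₀.arrows q α) hγ₀'.2.2.2
      have hT2pos : 0 < T2 := lt_trans hT hTT2
      have hC : 0 < T2 * q α := mul_pos hT2pos (hq α)
      have hUeq : U = ⋃ n : ℕ, Sset (T2 * q α) α n π q := by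
        apply subset_antisymm
        · apply Set.iUnion₂_subset
          intro p hp
          rw [hΓ, Set.mem_setOf_eq] at hp
          obtain ⟨⟨hmem, hchain⟩, hstart, hwin, hcross⟩ := hp
          apply Set.subset_iUnion_of_subset p.arrows.length
          intro l hl
          refine Set.mem_iUnion.mpr ⟨p.arrows, Set.mem_iUnion.mpr ⟨⟨?_, le_rfl, hwin, ?_⟩, hl⟩⟩
          · rw [← hstart]; exact hchain
          · exact (hiff _ (value_representable p.arrows q α)).mp hcross
        · apply Set.iUnion_subset
          intro n
          apply Set.iUnion_subset
          intro L
          apply Set.iUnion_subset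
          rintro ⟨hchain, _, hwin, hcross⟩
          intro l hl
          refine Set.mem_iUnion₂.mpr ⟨⟨π, L⟩, ?_, hl⟩
          rw [hΓ, Set.mem_setOf_eq]
          exact ⟨⟨hπ, hchain⟩, rfl, hwin,
            (hiff _ (value_representable L q α)).mpr hcross⟩
      have hvol : MeasureTheory.volume U
          ≤ ENNReal.ofReal (q α / (T2 * q α)) * MeasureTheory.volume (Lambda q) := by
        rw [hUeq, Monotone.measure_iUnion sset_mono]
        apply iSup_le
        intro n
        refine sset_bound hd hR hC α n π hπ q hq ?_
        nlinarith [hq α]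
      have hsimp : q α / (T2 * q α) = T2⁻¹ := by
        rw [mul_comm, div_mul_eq_div_div, div_self (ne_of_gt (hq α)), one_div]
      rw [hsimp] at hvol
      have hnum : (MeasureTheory.volume U).toReal
          ≤ T2⁻¹ * (MeasureTheory.volume (Lambda q)).toReal := by
        have h1 := ENNReal.toReal_mono
          (ENNReal.mul_ne_top ENNReal.ofReal_ne_top hΛfin.ne) hvol
        rwa [ENNReal.toReal_mul, ENNReal.toReal_ofReal (by positivity)] at h1
      have h2 : (MeasureTheory.volume U).toReal / (MeasureTheory.volume (Lambda q)).toReal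
          ≤ T2⁻¹ := by
        rw [div_le_iff₀ hΛtR]
        exact hnum
      exact lt_of_le_of_lt h2 (inv_strictAnti₀ hT hTT2)


end Rauzy
end

section
/- Let 0 < s < 1 and c ∈ ℂ ∖ {0}. For t ≥ 0 define K(t) = |c|²·e^{t(1+s)}·∫_ℝ∫_ℝ (1+x²)^{−(1+s)/2}·(1+e^{4t}y²)^{−(1+s)/2}·|x−y|^{s−1} dx dy, which equals the correlation ⟨f, ρ_s(g_t)·f⟩ in ℋ_s for f(x) = c·(1+x²)^{−(1+s)/2}. Then K(t) is finite and strictly positive for every t ≥ 0, and lim_{t→+∞} (1/t)·ln K(t) = −1 + s; in particular K(t) decays exponentially at exactly the rate e^{−(1−s)t}. -/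
open MeasureTheory

/-- The integrand of the correlation integral for the complementary series. -/
noncomputable def corrIntegrand (s t : ℝ) (p : ℝ × ℝ) : ℝ :=
  (1 + p.1 ^ 2) ^ (-(1 + s) / 2) * (1 + Real.exp (4 * t) * p.2 ^ 2) ^ (-(1 + s) / 2) *
    |p.1 - p.2| ^ (s - 1)

/-- The correlation `K(t) = ⟨f, ρ_s(g_t)·f⟩` for the `SO(2,ℝ)`-invariant vector
`f(x) = c·(1+x²)^{-(1+s)/2}` of the complementary series representation `ρ_s`. -/
noncomputable def corrK (s : ℝ) (c : ℂ) (t : ℝ) : ℝ :=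
  ‖c‖ ^ 2 * Real.exp (t * (1 + s)) * ∫ p : ℝ × ℝ, corrIntegrand s t p

open MeasureTheory Set Filter

namespace CorrAux

/-- The weight function `(1+x²)^{-(1+s)/2}`. -/
noncomputable def w (s x : ℝ) : ℝ := (1 + x ^ 2) ^ (-(1 + s) / 2)

lemma one_add_sq_pos (x : ℝ) : (0:ℝ) < 1 + x ^ 2 := by positivity

lemma w_pos (s x : ℝ) : 0 < w s x := Real.rpow_pos_of_pos (one_add_sq_pos x) _

lemma w_le_one {s : ℝ} (hs : 0 ≤ s) (x : ℝ) : w s x ≤ 1 := by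
  have h := Real.rpow_le_rpow_of_nonpos one_pos
    (by nlinarith [sq_nonneg x] : (1:ℝ) ≤ 1 + x ^ 2) (by linarith : -(1 + s) / 2 ≤ 0)
  rw [Real.one_rpow] at h
  exact h

lemma w_meas (s : ℝ) : Measurable (w s) := by unfold w; fun_prop

lemma integrable_w {s : ℝ} (hs : 0 < s) : Integrable (w s) := by
  have h := integrable_rpow_neg_one_add_norm_sq (E := ℝ) (μ := volume) (r := 1 + s)
    (by simp; linarith)
  simp only [Real.norm_eq_abs, sq_abs] at h
  exact h

lemma riesz_intervalIntegrable {s : ℝ} (hs : 0 < s) :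
    IntervalIntegrable (fun u : ℝ => |u| ^ (s - 1)) volume (-1) 1 := by
  have h1 : IntervalIntegrable (fun u : ℝ => u ^ (s - 1)) volume 0 1 :=
    intervalIntegral.intervalIntegrable_rpow' (by linarith)
  have h2 : IntervalIntegrable (fun u : ℝ => |u| ^ (s - 1)) volume 0 1 := by
    rw [intervalIntegrable_iff] at h1 ⊢
    refine h1.congr_fun (fun x hx => ?_) measurableSet_uIoc
    rw [Set.uIoc_of_le (by norm_num : (0:ℝ) ≤ 1)] at hx
    rw [abs_of_pos hx.1]
  have h3 : IntervalIntegrable (fun u : ℝ => |u| ^ (s - 1)) volume (-1) 0 := by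
    have h4 := (IntervalIntegrable.iff_comp_neg).mp h2
    simp only [abs_neg, neg_zero] at h4
    exact h4.symm
  exact h3.trans h2

lemma riesz_integrableOn {s : ℝ} (hs : 0 < s) :
    IntegrableOn (fun u : ℝ => |u| ^ (s - 1)) (Metric.ball (0:ℝ) 1) := by
  have h := (intervalIntegrable_iff).mp (riesz_intervalIntegrable hs)
  rw [Set.uIoc_of_le (by norm_num : (-1:ℝ) ≤ 1)] at h
  refine h.mono_set ?_
  rw [Real.ball_eq_Ioo]
  intro x hx
  simp only [Set.mem_Ioo] at hx
  exact ⟨by linarith [hx.1], by linarith [hx.2]⟩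

/-- The bump `|u|^{s-1}` truncated to the unit ball. -/
noncomputable def bump (s u : ℝ) : ℝ :=
  (Metric.ball (0:ℝ) 1).indicator (fun u => |u| ^ (s - 1)) u

lemma bump_integrable {s : ℝ} (hs : 0 < s) : Integrable (bump s) := by
  unfold bump
  exact (integrable_indicator_iff measurableSet_ball).mpr (riesz_integrableOn hs)

lemma bump_nonneg (s u : ℝ) : 0 ≤ bump s u :=
  Set.indicator_nonneg (fun _ _ => Real.rpow_nonneg (abs_nonneg _) _) _

/-- Uniform bound for the slice integrals. -/
noncomputable def M0 (s : ℝ) : ℝ := (∫ u, bump s u) + ∫ x, w s x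

lemma M0_nonneg {s : ℝ} : 0 ≤ M0 s :=
  add_nonneg (integral_nonneg (bump_nonneg s)) (integral_nonneg fun x => (w_pos s x).le)

lemma slice {s : ℝ} (hs0 : 0 < s) (hs1 : s < 1) (z : ℝ) :
    Integrable (fun x => w s x * |x - z| ^ (s - 1)) ∧
      (∫ x, w s x * |x - z| ^ (s - 1)) ≤ M0 s := by
  have hwint := integrable_w hs0
  have hbz : Integrable (fun x => bump s (x - z)) := (bump_integrable hs0).comp_sub_right z
  have hGint : Integrable (fun x => bump s (x - z) + w s x) := hbz.add hwint
  have hnn : ∀ x, 0 ≤ w s x * |x - z| ^ (s - 1) := fun x =>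
    mul_nonneg (w_pos s x).le (Real.rpow_nonneg (abs_nonneg _) _)
  have hbound : ∀ x, w s x * |x - z| ^ (s - 1) ≤ bump s (x - z) + w s x := by
    intro x
    by_cases h : |x - z| < 1
    · have h1 : bump s (x - z) = |x - z| ^ (s - 1) := by
        rw [bump, Set.indicator_of_mem]
        simpa [Metric.mem_ball, Real.dist_eq] using h
      calc w s x * |x - z| ^ (s - 1) ≤ 1 * |x - z| ^ (s - 1) :=
            mul_le_mul_of_nonneg_right (w_le_one hs0.le x) (Real.rpow_nonneg (abs_nonneg _) _)
        _ = bump s (x - z) := by rw [one_mul, h1]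
        _ ≤ bump s (x - z) + w s x := le_add_of_nonneg_right (w_pos s x).le
    · have h2 : |x - z| ^ (s - 1) ≤ 1 :=
        Real.rpow_le_one_of_one_le_of_nonpos (not_lt.mp h) (by linarith)
      calc w s x * |x - z| ^ (s - 1) ≤ w s x * 1 :=
            mul_le_mul_of_nonneg_left h2 (w_pos s x).le
        _ = w s x := mul_one _
        _ ≤ bump s (x - z) + w s x := le_add_of_nonneg_left (bump_nonneg s _)
  have hmeas : Measurable fun x => w s x * |x - z| ^ (s - 1) := by unfold w; fun_prop
  have hint : Integrable (fun x => w s x * |x - z| ^ (s - 1)) := by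
    refine hGint.mono' hmeas.aestronglyMeasurable (ae_of_all _ fun x => ?_)
    rw [Real.norm_eq_abs, abs_of_nonneg (hnn x)]
    exact hbound x
  refine ⟨hint, ?_⟩
  calc (∫ x, w s x * |x - z| ^ (s - 1)) ≤ ∫ x, (bump s (x - z) + w s x) :=
        integral_mono hint hGint hbound
    _ = (∫ x, bump s (x - z)) + ∫ x, w s x := integral_add hbz hwint
    _ = M0 s := by rw [M0, integral_sub_right_eq_self (bump s) z]

/-- The main two-variable integrability and bound lemma. -/
lemma key {s : ℝ} (hs0 : 0 < s) (hs1 : s < 1) {v φ : ℝ → ℝ} (hvm : Measurable v)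
    (hv0 : ∀ y, 0 ≤ v y) (hvw : ∀ y, v y ≤ w s y) (hφ : Measurable φ) :
    Integrable (fun p : ℝ × ℝ => w s p.1 * v p.2 * |p.1 - φ p.2| ^ (s - 1)) ∧
      (∫ p : ℝ × ℝ, w s p.1 * v p.2 * |p.1 - φ p.2| ^ (s - 1)) ≤ M0 s * ∫ x, w s x := by
  set H : ℝ × ℝ → ℝ := fun p => w s p.1 * v p.2 * |p.1 - φ p.2| ^ (s - 1) with hH
  have hwint := integrable_w hs0
  have hHm : Measurable H := by
    simp only [hH, w]
    fun_prop
  have hH0 : ∀ p, 0 ≤ H p := fun p =>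
    mul_nonneg (mul_nonneg (w_pos s p.1).le (hv0 p.2)) (Real.rpow_nonneg (abs_nonneg _) _)
  have hv_int : Integrable v := by
    refine hwint.mono' hvm.aestronglyMeasurable (ae_of_all _ fun y => ?_)
    rw [Real.norm_eq_abs, abs_of_nonneg (hv0 y)]
    exact hvw y
  have hv_nonneg : 0 ≤ ∫ y, v y := integral_nonneg hv0
  have hlin : (∫⁻ p : ℝ × ℝ, ENNReal.ofReal (H p)) ≤
      ENNReal.ofReal (∫ y, v y) * ENNReal.ofReal (M0 s) := by
    rw [Measure.volume_eq_prod, lintegral_prod_symm (fun p : ℝ × ℝ => ENNReal.ofReal (H p))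
      ((ENNReal.measurable_ofReal.comp hHm).aemeasurable)]
    calc (∫⁻ y, ∫⁻ x, ENNReal.ofReal (H (x, y)))
        ≤ ∫⁻ y, ENNReal.ofReal (v y) * ENNReal.ofReal (M0 s) := by
          refine lintegral_mono fun y => ?_
          have hrw : ∀ x, H (x, y) = v y * (w s x * |x - φ y| ^ (s - 1)) := by
            intro x; simp only [hH]; ring
          calc (∫⁻ x, ENNReal.ofReal (H (x, y)))
              = ∫⁻ x, ENNReal.ofReal (v y) * ENNReal.ofReal (w s x * |x - φ y| ^ (s - 1)) := by
                simp_rw [hrw, ENNReal.ofReal_mul (hv0 y)]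
            _ = ENNReal.ofReal (v y) * ∫⁻ x, ENNReal.ofReal (w s x * |x - φ y| ^ (s - 1)) := by
                rw [lintegral_const_mul]
                exact ENNReal.measurable_ofReal.comp (by unfold w; fun_prop)
            _ = ENNReal.ofReal (v y) * ENNReal.ofReal (∫ x, w s x * |x - φ y| ^ (s - 1)) := by
                rw [← ofReal_integral_eq_lintegral_ofReal (slice hs0 hs1 (φ y)).1
                  (ae_of_all _ fun x =>
                    mul_nonneg (w_pos s x).le (Real.rpow_nonneg (abs_nonneg _) _))]
            _ ≤ ENNReal.ofReal (v y) * ENNReal.ofReal (M0 s) :=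
                mul_le_mul_right (ENNReal.ofReal_le_ofReal (slice hs0 hs1 (φ y)).2) _
      _ = (∫⁻ y, ENNReal.ofReal (v y)) * ENNReal.ofReal (M0 s) :=
          lintegral_mul_const _ (ENNReal.measurable_ofReal.comp hvm)
      _ = ENNReal.ofReal (∫ y, v y) * ENNReal.ofReal (M0 s) := by
          rw [← ofReal_integral_eq_lintegral_ofReal hv_int (ae_of_all _ hv0)]
  have hint : Integrable H := by
    refine ⟨hHm.aestronglyMeasurable, ?_⟩
    rw [hasFiniteIntegral_iff_ofReal (ae_of_all _ hH0)]
    exact lt_of_le_of_lt hlin (ENNReal.mul_lt_top ENNReal.ofReal_lt_top ENNReal.ofReal_lt_top)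
  refine ⟨hint, ?_⟩
  rw [integral_eq_lintegral_of_nonneg_ae (ae_of_all _ hH0) hHm.aestronglyMeasurable]
  have h1 : (∫⁻ p : ℝ × ℝ, ENNReal.ofReal (H p)).toReal ≤
      (ENNReal.ofReal (∫ y, v y) * ENNReal.ofReal (M0 s)).toReal :=
    ENNReal.toReal_mono (ENNReal.mul_ne_top ENNReal.ofReal_ne_top ENNReal.ofReal_ne_top) hlin
  rw [ENNReal.toReal_mul, ENNReal.toReal_ofReal hv_nonneg, ENNReal.toReal_ofReal M0_nonneg] at h1
  refine h1.trans ?_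
  rw [mul_comm]
  exact mul_le_mul_of_nonneg_left (integral_mono hv_int hwint hvw) M0_nonneg

end CorrAux

open CorrAux

namespace CorrAux

/-- The rescaled correlation integral. -/
noncomputable def Jint (s t : ℝ) : ℝ :=
  ∫ p : ℝ × ℝ, w s p.1 * w s p.2 * |p.1 - Real.exp (-(2 * t)) * p.2| ^ (s - 1)

lemma vt_le_w {s t : ℝ} (hs : 0 ≤ s) (ht : 0 ≤ t) (y : ℝ) :
    (1 + Real.exp (4 * t) * y ^ 2) ^ (-(1 + s) / 2) ≤ w s y := by
  unfold w
  have h1 : (1:ℝ) ≤ Real.exp (4 * t) := Real.one_le_exp (by linarith)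
  refine Real.rpow_le_rpow_of_nonpos (one_add_sq_pos y) ?_ (by linarith)
  nlinarith [sq_nonneg y]

lemma corrIntegrand_eq (s t : ℝ) : corrIntegrand s t =
    fun p : ℝ × ℝ => w s p.1 * ((fun y => (1 + Real.exp (4 * t) * y ^ 2) ^ (-(1 + s) / 2)) p.2) *
      |p.1 - id p.2| ^ (s - 1) := rfl

lemma corr_integrable {s : ℝ} (hs0 : 0 < s) (hs1 : s < 1) {t : ℝ} (ht : 0 ≤ t) :
    Integrable (corrIntegrand s t) := by
  rw [corrIntegrand_eq]
  exact (key hs0 hs1 (v := fun y => (1 + Real.exp (4 * t) * y ^ 2) ^ (-(1 + s) / 2))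
    (φ := id) (by fun_prop) (fun y => Real.rpow_nonneg (by positivity) _)
    (fun y => vt_le_w hs0.le ht y) measurable_id).1

lemma Jint_integrable {s : ℝ} (hs0 : 0 < s) (hs1 : s < 1) (t : ℝ) :
    Integrable (fun p : ℝ × ℝ =>
      w s p.1 * w s p.2 * |p.1 - Real.exp (-(2 * t)) * p.2| ^ (s - 1)) :=
  (key hs0 hs1 (v := w s) (φ := fun y => Real.exp (-(2 * t)) * y) (w_meas s)
    (fun y => (w_pos s y).le) (fun _ => le_rfl) (by fun_prop)).1

lemma Jint_le {s : ℝ} (hs0 : 0 < s) (hs1 : s < 1) (t : ℝ) :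
    Jint s t ≤ M0 s * ∫ x, w s x :=
  (key hs0 hs1 (v := w s) (φ := fun y => Real.exp (-(2 * t)) * y) (w_meas s)
    (fun y => (w_pos s y).le) (fun _ => le_rfl) (by fun_prop)).2

lemma subst {s : ℝ} (hs0 : 0 < s) (hs1 : s < 1) {t : ℝ} (ht : 0 ≤ t) :
    (∫ p : ℝ × ℝ, corrIntegrand s t p) = Real.exp (-(2 * t)) * Jint s t := by
  have hF : Integrable (corrIntegrand s t) := corr_integrable hs0 hs1 ht
  have hG := Jint_integrable hs0 hs1 t
  unfold Jint
  rw [Measure.volume_eq_prod] at hF hG ⊢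
  rw [integral_prod _ hF, integral_prod _ hG, ← integral_const_mul]
  refine integral_congr_ae (ae_of_all _ fun x => ?_)
  show (∫ y, corrIntegrand s t (x, y)) =
    Real.exp (-(2 * t)) * ∫ y, w s x * w s y * |x - Real.exp (-(2 * t)) * y| ^ (s - 1)
  have hx : (fun y => corrIntegrand s t (x, y)) =
      fun y => (fun u => w s x * w s u * |x - Real.exp (-(2 * t)) * u| ^ (s - 1))
        (Real.exp (2 * t) * y) := by
    funext y
    simp only [corrIntegrand, w]
    have e1 : Real.exp (-(2 * t)) * (Real.exp (2 * t) * y) = y := by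
      rw [← mul_assoc, ← Real.exp_add]
      norm_num
    have h2 : Real.exp (2 * t) ^ 2 = Real.exp (4 * t) := by
      rw [pow_two, ← Real.exp_add]
      ring_nf
    have e2 : (1 : ℝ) + Real.exp (4 * t) * y ^ 2 = 1 + (Real.exp (2 * t) * y) ^ 2 := by
      rw [mul_pow, h2]
    rw [e1, ← e2]
  rw [hx]
  have hcomp := MeasureTheory.Measure.integral_comp_mul_left
    (fun u => w s x * w s u * |x - Real.exp (-(2 * t)) * u| ^ (s - 1)) (Real.exp (2 * t))
  rw [hcomp, abs_of_pos (inv_pos.2 (Real.exp_pos _)), ← Real.exp_neg, smul_eq_mul]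

lemma Jint_ge {s : ℝ} (hs0 : 0 < s) (hs1 : s < 1) {t : ℝ} (ht : 0 ≤ t) :
    (1/10 : ℝ) * (1/2) * 3 ^ (s - 1) ≤ Jint s t := by
  set ε := Real.exp (-(2 * t)) with hεdef
  have hε0 : 0 < ε := Real.exp_pos _
  have hε1 : ε ≤ 1 := Real.exp_le_one_iff.mpr (by linarith)
  set κ := (1/10 : ℝ) * (1/2) * 3 ^ (s - 1) with hκdef
  have hG := Jint_integrable hs0 hs1 t
  set S : Set (ℝ × ℝ) := Icc (2:ℝ) 3 ×ˢ Icc (0:ℝ) 1 with hSdef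
  have hSm : MeasurableSet S := measurableSet_Icc.prod measurableSet_Icc
  have hvol : volume S = 1 := by
    rw [hSdef, Measure.volume_eq_prod, Measure.prod_prod, Real.volume_Icc, Real.volume_Icc]
    norm_num
  have hpt : ∀ p ∈ S, κ ≤ w s p.1 * w s p.2 * |p.1 - ε * p.2| ^ (s - 1) := by
    rintro ⟨x, y⟩ ⟨hx, hy⟩
    simp only [Set.mem_Icc] at hx hy
    have h1 : (1/10 : ℝ) ≤ w s x := by
      have hb : (1:ℝ) + x ^ 2 ≤ 10 := by nlinarith [hx.1, hx.2]
      have ha : (10:ℝ) ^ (-(1 + s) / 2) ≤ (1 + x ^ 2) ^ (-(1 + s) / 2) :=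
        Real.rpow_le_rpow_of_nonpos (one_add_sq_pos x) hb (by linarith)
      have hb2 : (10:ℝ) ^ (-1 : ℝ) ≤ (10:ℝ) ^ (-(1 + s) / 2) :=
        Real.rpow_le_rpow_of_exponent_le (by norm_num) (by linarith)
      have hb3 : (10:ℝ) ^ (-1 : ℝ) = 1/10 := by rw [Real.rpow_neg_one]; norm_num
      unfold w
      linarith
    have h2 : (1/2 : ℝ) ≤ w s y := by
      have hb : (1:ℝ) + y ^ 2 ≤ 2 := by nlinarith [hy.1, hy.2]
      have ha : (2:ℝ) ^ (-(1 + s) / 2) ≤ (1 + y ^ 2) ^ (-(1 + s) / 2) :=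
        Real.rpow_le_rpow_of_nonpos (one_add_sq_pos y) hb (by linarith)
      have hb2 : (2:ℝ) ^ (-1 : ℝ) ≤ (2:ℝ) ^ (-(1 + s) / 2) :=
        Real.rpow_le_rpow_of_exponent_le (by norm_num) (by linarith)
      have hb3 : (2:ℝ) ^ (-1 : ℝ) = 1/2 := by rw [Real.rpow_neg_one]; norm_num
      unfold w
      linarith
    have hεy : ε * y ≤ 1 := by nlinarith [mul_le_mul hε1 hy.2 hy.1 zero_le_one]
    have hεy0 : 0 ≤ ε * y := mul_nonneg hε0.le hy.1
    have hd1 : (1:ℝ) ≤ x - ε * y := by linarith [hx.1]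
    have hd3 : x - ε * y ≤ 3 := by linarith [hx.2]
    have h3 : (3:ℝ) ^ (s - 1) ≤ |x - ε * y| ^ (s - 1) := by
      rw [abs_of_pos (by linarith : (0:ℝ) < x - ε * y)]
      exact Real.rpow_le_rpow_of_nonpos (by linarith) hd3 (by linarith)
    exact mul_le_mul (mul_le_mul h1 h2 (by norm_num) (w_pos s x).le) h3
      (Real.rpow_nonneg (by norm_num) _) (mul_nonneg (w_pos s x).le (w_pos s y).le)
  calc κ = κ * (volume S).toReal := by rw [hvol]; simp
    _ ≤ ∫ p in S, w s p.1 * w s p.2 * |p.1 - ε * p.2| ^ (s - 1) :=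
        by have := setIntegral_ge_of_const_le_real hSm (by rw [hvol]; exact ENNReal.one_ne_top) hpt
             hG.integrableOn
           exact this
    _ ≤ ∫ p : ℝ × ℝ, w s p.1 * w s p.2 * |p.1 - ε * p.2| ^ (s - 1) :=
        setIntegral_le_integral hG (ae_of_all _ fun p =>
          mul_nonneg (mul_nonneg (w_pos _ _).le (w_pos _ _).le)
            (Real.rpow_nonneg (abs_nonneg _) _))
    _ = Jint s t := rfl

lemma kappa_pos {s : ℝ} : (0:ℝ) < (1/10 : ℝ) * (1/2) * 3 ^ (s - 1) := by positivity

lemma corrK_eq {s : ℝ} (hs0 : 0 < s) (hs1 : s < 1) (c : ℂ) {t : ℝ} (ht : 0 ≤ t) :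
    corrK s c t = ‖c‖ ^ 2 * Real.exp ((s - 1) * t) * Jint s t := by
  unfold corrK
  rw [subst hs0 hs1 ht]
  have h : Real.exp (t * (1 + s)) * Real.exp (-(2 * t)) = Real.exp ((s - 1) * t) := by
    rw [← Real.exp_add]
    ring_nf
  calc ‖c‖ ^ 2 * Real.exp (t * (1 + s)) * (Real.exp (-(2 * t)) * Jint s t)
      = ‖c‖ ^ 2 * (Real.exp (t * (1 + s)) * Real.exp (-(2 * t))) * Jint s t := by
        ring
    _ = _ := by rw [h]

end CorrAux

/-- For `0 < s < 1` and `c ≠ 0`, the correlation `K(t)` is finite and strictly positive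
for every `t ≥ 0`, and `(1/t)·ln K(t) → −1 + s`: the correlations of the
complementary series decay exponentially at exactly the rate `e^{−(1−s)t}`. -/
theorem complementary_series_correlation (s : ℝ) (hs0 : 0 < s) (hs1 : s < 1)
    (c : ℂ) (hc : c ≠ 0) :
    (∀ t : ℝ, 0 ≤ t → Integrable (corrIntegrand s t) ∧ 0 < corrK s c t) ∧
    Filter.Tendsto (fun t : ℝ => Real.log (corrK s c t) / t)
      Filter.atTop (nhds (-1 + s)) := by
  have hA : 0 < ‖c‖ ^ 2 := pow_pos (norm_pos_iff.mpr hc) 2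
  have hκ : 0 < (1/10 : ℝ) * (1/2) * 3 ^ (s - 1) := kappa_pos
  have hKpos : ∀ t : ℝ, 0 ≤ t → 0 < corrK s c t := by
    intro t ht
    rw [corrK_eq hs0 hs1 c ht]
    exact mul_pos (mul_pos hA (Real.exp_pos _)) (lt_of_lt_of_le hκ (Jint_ge hs0 hs1 ht))
  constructor
  · exact fun t ht => ⟨corr_integrable hs0 hs1 ht, hKpos t ht⟩
  · have hlog : ∀ t : ℝ, 0 ≤ t → Real.log (corrK s c t) =
        Real.log (‖c‖ ^ 2) + (s - 1) * t + Real.log (Jint s t) := by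
      intro t ht
      have hJ : 0 < Jint s t := lt_of_lt_of_le hκ (Jint_ge hs0 hs1 ht)
      rw [corrK_eq hs0 hs1 c ht, Real.log_mul (mul_pos hA (Real.exp_pos _)).ne' hJ.ne',
        Real.log_mul hA.ne' (Real.exp_pos _).ne', Real.log_exp]
    set A := Real.log (‖c‖ ^ 2) with hAdef
    set κ := (1/10 : ℝ) * (1/2) * 3 ^ (s - 1) with hκdef
    set Mup := M0 s * ∫ x, w s x with hMdef
    have hMpos : 0 < Mup := lt_of_lt_of_le hκ ((Jint_ge hs0 hs1 le_rfl).trans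
      (Jint_le hs0 hs1 0))
    have hglim : Tendsto (fun t : ℝ => (s - 1) + (A + Real.log κ) / t) atTop
        (nhds (-1 + s)) := by
      have h := tendsto_const_nhds (x := (s - 1 : ℝ)) (f := atTop).add
        ((tendsto_const_nhds (x := A + Real.log κ)).div_atTop tendsto_id)
      rw [show (s - 1 : ℝ) + 0 = -1 + s by ring] at h
      exact h
    have hhlim : Tendsto (fun t : ℝ => (s - 1) + (A + Real.log Mup) / t) atTop
        (nhds (-1 + s)) := by
      have h := tendsto_const_nhds (x := (s - 1 : ℝ)) (f := atTop).add
        ((tendsto_const_nhds (x := A + Real.log Mup)).div_atTop tendsto_id)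
      rw [show (s - 1 : ℝ) + 0 = -1 + s by ring] at h
      exact h
    refine tendsto_of_tendsto_of_tendsto_of_le_of_le' hglim hhlim ?_ ?_
    · filter_upwards [eventually_ge_atTop 1] with t ht1
      have ht0 : (0:ℝ) < t := by linarith
      have hJge := Jint_ge hs0 hs1 ht0.le
      rw [hlog t ht0.le,
        show (A + (s - 1) * t + Real.log (Jint s t)) / t
          = (s - 1) + (A + Real.log (Jint s t)) / t by field_simp; ring]
      gcongr
    · filter_upwards [eventually_ge_atTop 1] with t ht1
      have ht0 : (0:ℝ) < t := by linarith
      have hJge := Jint_ge hs0 hs1 ht0.le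
      have hJpos : 0 < Jint s t := lt_of_lt_of_le hκ hJge
      rw [hlog t ht0.le,
        show (A + (s - 1) * t + Real.log (Jint s t)) / t
          = (s - 1) + (A + Real.log (Jint s t)) / t by field_simp; ring]
      gcongr
      rw [hMdef]
      exact Jint_le hs0 hs1 t
end

section
/- Let π be an irreducible permutation pair and let τ ∈ closure(Θ_π) with τ ≠ 0. Then the vector h = −Ω(π)·τ, whose coordinates are h_ξ = Σ_{π_t(α) < π_t(ξ)} τ_α − Σ_{π_b(α) < π_b(ξ)} τ_α, satisfies h_ξ ≥ 0 for every ξ ∈ 𝒜 and h ≠ 0. -/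
open scoped BigOperators
open Matrix

namespace Rauzy

variable {A : Type} [Fintype A] [DecidableEq A]

/-- The antisymmetric operator `Ω(π)`: `⟨Ω(π)·e_x, e_y⟩ = 1` if `π_t(x) > π_t(y)` and
`π_b(x) < π_b(y)`, `= -1` in the symmetric case, `= 0` otherwise. -/
noncomputable def OmegaMat (π : PermPair A) : Matrix A A ℝ := fun a b =>
  if (π.top a : ℕ) < (π.top b : ℕ) ∧ (π.bot b : ℕ) < (π.bot a : ℕ) then 1
  else if (π.top b : ℕ) < (π.top a : ℕ) ∧ (π.bot a : ℕ) < (π.bot b : ℕ) then -1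
  else 0

/-- The height vector `h` with coordinates
`h_ξ = Σ_{π_t(α) < π_t(ξ)} τ_α − Σ_{π_b(α) < π_b(ξ)} τ_α`. -/
noncomputable def hVec (π : PermPair A) (τ : A → ℝ) : A → ℝ := fun ξ =>
  (∑ a ∈ Finset.univ.filter (fun a => (π.top a : ℕ) < (π.top ξ : ℕ)), τ a) -
  (∑ a ∈ Finset.univ.filter (fun a => (π.bot a : ℕ) < (π.bot ξ : ℕ)), τ a)

lemma step_sum (e : A ≃ Fin (Fintype.card A)) (τ : A → ℝ) (ξ : A) :
    ∑ a ∈ Finset.univ.filter (fun a => (e a : ℕ) < (e ξ : ℕ) + 1), τ a =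
    (∑ a ∈ Finset.univ.filter (fun a => (e a : ℕ) < (e ξ : ℕ)), τ a) + τ ξ := by
  have h1 : Finset.univ.filter (fun a => (e a : ℕ) < (e ξ : ℕ) + 1) =
      insert ξ (Finset.univ.filter (fun a => (e a : ℕ) < (e ξ : ℕ))) := by
    ext a
    simp only [Finset.mem_filter, Finset.mem_insert, Finset.mem_univ, true_and]
    constructor
    · intro h
      rcases Nat.lt_succ_iff_lt_or_eq.mp h with h | h
      · exact Or.inr h
      · exact Or.inl (e.injective (Fin.ext h))
    · rintro (rfl | h) <;> omega
  rw [h1, Finset.sum_insert (by simp)]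
  ring

/-- For `π` irreducible and `τ ∈ closure(Θ_π) ∖ {0}`, the vector `h = −Ω(π)·τ`, whose
coordinates are given by `hVec`, is nonnegative and nonzero. -/
theorem height_vector_nonneg (hd : 2 ≤ Fintype.card A)
    (π : PermPair A) (hirr : Irreducible π)
    (τ : A → ℝ) (hτ : τ ∈ closure (Theta π)) (hne : τ ≠ 0) :
    hVec π τ = -((OmegaMat π).mulVec τ) ∧
    (∀ ξ : A, 0 ≤ hVec π τ ξ) ∧ hVec π τ ≠ 0 := by
  classical
  -- closure facts
  have key : ∀ k : ℕ, 0 < k → k < Fintype.card A →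
      (0 ≤ ∑ ξ ∈ Finset.univ.filter (fun ξ => (π.top ξ : ℕ) < k), τ ξ) ∧
      (∑ ξ ∈ Finset.univ.filter (fun ξ => (π.bot ξ : ℕ) < k), τ ξ ≤ 0) := by
    intro k hk hk'
    constructor
    · have hcl : IsClosed {σ : A → ℝ |
          0 ≤ ∑ ξ ∈ Finset.univ.filter (fun ξ => (π.top ξ : ℕ) < k), σ ξ} :=
        isClosed_le continuous_const (continuous_finset_sum _ fun i _ => continuous_apply i)
      exact (closure_minimal (fun σ hσ => le_of_lt ((hσ k hk hk').1)) hcl) hτ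
    · have hcl : IsClosed {σ : A → ℝ |
          ∑ ξ ∈ Finset.univ.filter (fun ξ => (π.bot ξ : ℕ) < k), σ ξ ≤ 0} :=
        isClosed_le (continuous_finset_sum _ fun i _ => continuous_apply i) continuous_const
      exact (closure_minimal (fun σ hσ => le_of_lt ((hσ k hk hk').2)) hcl) hτ
  have Stnn : ∀ ξ : A,
      0 ≤ ∑ a ∈ Finset.univ.filter (fun a => (π.top a : ℕ) < (π.top ξ : ℕ)), τ a := by
    intro ξ
    rcases Nat.eq_zero_or_pos ((π.top ξ : ℕ)) with h | h
    · rw [h]; simp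
    · exact (key _ h (π.top ξ).isLt).1
  have Sbnp : ∀ ξ : A,
      ∑ a ∈ Finset.univ.filter (fun a => (π.bot a : ℕ) < (π.bot ξ : ℕ)), τ a ≤ 0 := by
    intro ξ
    rcases Nat.eq_zero_or_pos ((π.bot ξ : ℕ)) with h | h
    · rw [h]; simp
    · exact (key _ h (π.bot ξ).isLt).2
  have part1 : hVec π τ = -((OmegaMat π).mulVec τ) := by
    funext ξ
    have hterm : ∀ a : A,
        (if (π.top a : ℕ) < (π.top ξ : ℕ) then τ a else 0) -
        (if (π.bot a : ℕ) < (π.bot ξ : ℕ) then τ a else 0) = -(OmegaMat π ξ a * τ a) := by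
      intro a
      unfold OmegaMat
      rcases lt_trichotomy ((π.top a : ℕ)) ((π.top ξ : ℕ)) with h1 | h1 | h1
      · rcases lt_trichotomy ((π.bot a : ℕ)) ((π.bot ξ : ℕ)) with h2 | h2 | h2
        · simp [h1, h2, lt_asymm h1, lt_asymm h2]
        · have : a = ξ := π.bot.injective (Fin.ext h2)
          subst this; exact absurd h1 (lt_irrefl _)
        · simp [Fin.lt_def, h1, h2, lt_asymm h1, lt_asymm h2]
      · have : a = ξ := π.top.injective (Fin.ext h1)
        subst this; simp
      · rcases lt_trichotomy ((π.bot a : ℕ)) ((π.bot ξ : ℕ)) with h2 | h2 | h2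
        · simp [Fin.lt_def, h1, h2, lt_asymm h1, lt_asymm h2]
        · have : a = ξ := π.bot.injective (Fin.ext h2)
          subst this; exact absurd h1 (lt_irrefl _)
        · simp [lt_asymm h1, lt_asymm h2]
    show (∑ a ∈ Finset.univ.filter (fun a => (π.top a : ℕ) < (π.top ξ : ℕ)), τ a) -
      (∑ a ∈ Finset.univ.filter (fun a => (π.bot a : ℕ) < (π.bot ξ : ℕ)), τ a)
      = -((OmegaMat π).mulVec τ ξ)
    rw [Finset.sum_filter, Finset.sum_filter, ← Finset.sum_sub_distrib]
    simp only [hterm]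
    rw [Finset.sum_neg_distrib]
    simp [Matrix.mulVec, dotProduct]
  refine ⟨part1, ?_, ?_⟩
  · intro ξ
    have h1 := Stnn ξ
    have h2 := Sbnp ξ
    show 0 ≤ (∑ a ∈ Finset.univ.filter (fun a => (π.top a : ℕ) < (π.top ξ : ℕ)), τ a) -
      (∑ a ∈ Finset.univ.filter (fun a => (π.bot a : ℕ) < (π.bot ξ : ℕ)), τ a)
    linarith
  · intro hzero
    have hboth : ∀ ξ : A,
        (∑ a ∈ Finset.univ.filter (fun a => (π.top a : ℕ) < (π.top ξ : ℕ)), τ a) = 0 ∧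
        (∑ a ∈ Finset.univ.filter (fun a => (π.bot a : ℕ) < (π.bot ξ : ℕ)), τ a) = 0 := by
      intro ξ
      have h0 : hVec π τ ξ = 0 := by rw [hzero]; rfl
      have h0' : (∑ a ∈ Finset.univ.filter (fun a => (π.top a : ℕ) < (π.top ξ : ℕ)), τ a) -
          (∑ a ∈ Finset.univ.filter (fun a => (π.bot a : ℕ) < (π.bot ξ : ℕ)), τ a) = 0 := h0
      have h1 := Stnn ξ
      have h2 := Sbnp ξ
      constructor <;> linarith
    -- the last letters on top and bottom
    have hdpos : Fintype.card A - 1 < Fintype.card A := by omega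
    set ξt : A := π.top.symm ⟨Fintype.card A - 1, hdpos⟩ with hξt
    set ξb : A := π.bot.symm ⟨Fintype.card A - 1, hdpos⟩ with hξb
    have htξt : (π.top ξt : ℕ) = Fintype.card A - 1 := by
      rw [hξt, Equiv.apply_symm_apply]
    have hbξb : (π.bot ξb : ℕ) = Fintype.card A - 1 := by
      rw [hξb, Equiv.apply_symm_apply]
    have hne' : ξt ≠ ξb := by
      intro heq
      apply hirr (Fintype.card A - 1) (by omega) (by omega)
      ext a
      have ha : (π.top a : ℕ) < Fintype.card A := (π.top a).isLt
      have hb : (π.bot a : ℕ) < Fintype.card A := (π.bot a).isLt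
      simp only [Set.mem_setOf_eq]
      constructor
      · intro h
        by_contra hc
        have hbeq : (π.bot a : ℕ) = Fintype.card A - 1 := by omega
        have : a = ξb := by
          apply π.bot.injective; apply Fin.ext
          rw [hbeq, hbξb]
        rw [this, ← heq, htξt] at h
        omega
      · intro h
        by_contra hc
        have hteq : (π.top a : ℕ) = Fintype.card A - 1 := by omega
        have : a = ξt := by
          apply π.top.injective; apply Fin.ext
          rw [hteq, htξt]
        rw [this, heq, hbξb] at h
        omega
    apply hne
    funext ξ
    show τ ξ = 0
    by_cases hcase : (π.top ξ : ℕ) < Fintype.card A - 1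
    · have hlt : (π.top ξ : ℕ) + 1 < Fintype.card A := by omega
      set ξ' : A := π.top.symm ⟨(π.top ξ : ℕ) + 1, hlt⟩ with hξ'
      have h' : (π.top ξ' : ℕ) = (π.top ξ : ℕ) + 1 := by
        rw [hξ', Equiv.apply_symm_apply]
      have hs := step_sum π.top τ ξ
      rw [← h'] at hs
      rw [(hboth ξ').1, (hboth ξ).1] at hs
      linarith
    · have hteq : (π.top ξ : ℕ) = Fintype.card A - 1 := by
        have := (π.top ξ).isLt; omega
      have hxt : ξ = ξt := by
        apply π.top.injective; apply Fin.ext; rw [hteq, htξt]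
      have hblt : (π.bot ξ : ℕ) < Fintype.card A - 1 := by
        have hb := (π.bot ξ).isLt
        rcases Nat.lt_or_ge ((π.bot ξ : ℕ)) (Fintype.card A - 1) with h | h
        · exact h
        · exfalso
          have hbeq : (π.bot ξ : ℕ) = Fintype.card A - 1 := by omega
          have : ξ = ξb := by
            apply π.bot.injective; apply Fin.ext; rw [hbeq, hbξb]
          exact hne' (hxt ▸ this)
      have hlt : (π.bot ξ : ℕ) + 1 < Fintype.card A := by omega
      set ξ' : A := π.bot.symm ⟨(π.bot ξ : ℕ) + 1, hlt⟩ with hξ'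
      have h' : (π.bot ξ' : ℕ) = (π.bot ξ : ℕ) + 1 := by
        rw [hξ', Equiv.apply_symm_apply]
      have hs := step_sum π.bot τ ξ
      rw [← h'] at hs
      rw [(hboth ξ').2, (hboth ξ).2] at hs
      linarith

end Rauzy
end

section
/- Let π be an irreducible permutation pair. Then the vector τ ∈ ℝ^𝒜 with coordinates τ_ξ = π_b(ξ) − π_t(ξ) belongs to Θ_π; in particular, Θ_π is a nonempty open convex polyhedral cone. -/
open scoped BigOperators
open Matrix

namespace Rauzy

variable {A : Type} [Fintype A] [DecidableEq A]

private lemma sum_range_le_aux (k : ℕ) (T : Finset ℕ) (h : T.card = k) :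
    ∑ i ∈ Finset.range k, i ≤ ∑ i ∈ T, i := by
  induction k generalizing T with
  | zero => simp
  | succ n ih =>
    have hne : T.Nonempty := Finset.card_pos.mp (by omega)
    set m := T.max' hne with hm
    have hmem : m ∈ T := T.max'_mem hne
    have hsub : T ⊆ Finset.range (m + 1) := fun x hx =>
      Finset.mem_range.mpr (Nat.lt_succ_of_le (T.le_max' x hx))
    have hcle : n + 1 ≤ m + 1 := by
      have := Finset.card_le_card hsub
      simpa [h] using this
    have hcard' : (T.erase m).card = n := by
      rw [Finset.card_erase_of_mem hmem, h]; omega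
    have h1 := ih (T.erase m) hcard'
    have hsum : ∑ i ∈ T.erase m, i + m = ∑ i ∈ T, i :=
      Finset.sum_erase_add T _ hmem
    rw [Finset.sum_range_succ]
    omega

private lemma sum_range_lt_aux (k : ℕ) (T : Finset ℕ) (h : T.card = k)
    (hne : T ≠ Finset.range k) :
    ∑ i ∈ Finset.range k, i < ∑ i ∈ T, i := by
  cases k with
  | zero =>
    rw [Finset.card_eq_zero] at h
    simp [h] at hne
  | succ n =>
    have hT : T.Nonempty := Finset.card_pos.mp (by omega)
    set m := T.max' hT with hm
    have hmem : m ∈ T := T.max'_mem hT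
    by_cases hmn : m ≤ n
    · have hsub : T ⊆ Finset.range (n + 1) := fun x hx =>
        Finset.mem_range.mpr (Nat.lt_succ_of_le (le_trans (T.le_max' x hx) hmn))
      exact absurd (Finset.eq_of_subset_of_card_le hsub (by simp [h])) hne
    · push_neg at hmn
      have hcard' : (T.erase m).card = n := by
        rw [Finset.card_erase_of_mem hmem, h]; omega
      have h1 := sum_range_le_aux n (T.erase m) hcard'
      have hsum : ∑ i ∈ T.erase m, i + m = ∑ i ∈ T, i :=
        Finset.sum_erase_add T _ hmem
      rw [Finset.sum_range_succ]
      omega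

private lemma filter_image_aux (e : A ≃ Fin (Fintype.card A)) (k : ℕ)
    (hk : k ≤ Fintype.card A) :
    (Finset.univ.filter (fun ξ => (e ξ : ℕ) < k)).image (fun ξ => (e ξ : ℕ)) =
      Finset.range k := by
  ext j
  simp only [Finset.mem_image, Finset.mem_range, Finset.mem_filter, Finset.mem_univ,
    true_and]
  constructor
  · rintro ⟨a, ha, rfl⟩; exact ha
  · intro hj
    exact ⟨e.symm ⟨j, lt_of_lt_of_le hj hk⟩, by simpa using hj, by simp⟩

private lemma filter_injOn_aux (e : A ≃ Fin (Fintype.card A)) (S : Finset A) :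
    ∀ x ∈ S, ∀ y ∈ S, (e x : ℕ) = (e y : ℕ) → x = y :=
  fun x _ y _ h => e.injective (Fin.val_injective h)

private lemma filter_card_aux (e : A ≃ Fin (Fintype.card A)) (k : ℕ)
    (hk : k ≤ Fintype.card A) :
    (Finset.univ.filter (fun ξ => (e ξ : ℕ) < k)).card = k := by
  have h := Finset.card_image_of_injOn
    (f := fun ξ => (e ξ : ℕ)) (s := Finset.univ.filter (fun ξ => (e ξ : ℕ) < k))
    (fun x hx y hy hxy => filter_injOn_aux e _ x hx y hy hxy)
  rw [filter_image_aux e k hk, Finset.card_range] at h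
  exact h.symm

private lemma key_lt_aux (f g : A ≃ Fin (Fintype.card A)) (k : ℕ)
    (hk2 : k < Fintype.card A)
    (hne : {a : A | (f a : ℕ) < k} ≠ {a : A | (g a : ℕ) < k}) :
    ∑ ξ ∈ Finset.univ.filter (fun ξ => (f ξ : ℕ) < k), ((f ξ : ℕ) : ℝ) <
    ∑ ξ ∈ Finset.univ.filter (fun ξ => (f ξ : ℕ) < k), ((g ξ : ℕ) : ℝ) := by
  set S := Finset.univ.filter (fun ξ => (f ξ : ℕ) < k) with hS
  have hcardS : S.card = k := filter_card_aux f k hk2.le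
  set T := S.image (fun ξ => (g ξ : ℕ)) with hT
  have hcardT : T.card = k := by
    rw [hT, Finset.card_image_of_injOn (fun x hx y hy hxy =>
      filter_injOn_aux g S x hx y hy hxy), hcardS]
  have hTne : T ≠ Finset.range k := by
    intro hEq
    apply hne
    have hSsub : S ⊆ Finset.univ.filter (fun ξ => (g ξ : ℕ) < k) := by
      intro a ha
      have hmem : (g a : ℕ) ∈ T := Finset.mem_image_of_mem _ ha
      rw [hEq, Finset.mem_range] at hmem
      simp [Finset.mem_filter, hmem]
    have hSeq : S = Finset.univ.filter (fun ξ => (g ξ : ℕ) < k) :=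
      Finset.eq_of_subset_of_card_le hSsub
        (by rw [filter_card_aux g k hk2.le, hcardS])
    ext a
    have := Finset.ext_iff.mp hSeq a
    simp only [hS, Finset.mem_filter, Finset.mem_univ, true_and] at this
    simpa [Set.mem_setOf_eq] using this
  have h1 : ∑ ξ ∈ S, (f ξ : ℕ) = ∑ i ∈ Finset.range k, i := by
    rw [← filter_image_aux f k hk2.le, Finset.sum_image (filter_injOn_aux f _)]
  have h2 : ∑ ξ ∈ S, (g ξ : ℕ) = ∑ i ∈ T, i := by
    rw [hT, Finset.sum_image (filter_injOn_aux g _)]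
  have hlt : ∑ ξ ∈ S, (f ξ : ℕ) < ∑ ξ ∈ S, (g ξ : ℕ) := by
    rw [h1, h2]
    exact sum_range_lt_aux k T hcardT hTne
  exact_mod_cast hlt

/-- For `π` irreducible, the vector `τ_ξ = π_b(ξ) − π_t(ξ)` belongs to `Θ_π`;
in particular, `Θ_π` is a nonempty open convex cone. -/
theorem theta_nonempty_open_convex_cone (hd : 2 ≤ Fintype.card A)
    (π : PermPair A) (hirr : Irreducible π) :
    (fun ξ : A => ((π.bot ξ : ℕ) : ℝ) - ((π.top ξ : ℕ) : ℝ)) ∈ Theta π ∧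
    (Theta π).Nonempty ∧ IsOpen (Theta π) ∧ Convex ℝ (Theta π) ∧
    ∀ c : ℝ, 0 < c → ∀ τ ∈ Theta π, c • τ ∈ Theta π := by
  have hmem : (fun ξ : A => ((π.bot ξ : ℕ) : ℝ) - ((π.top ξ : ℕ) : ℝ)) ∈ Theta π := by
    intro k hk1 hk2
    constructor
    · rw [Finset.sum_sub_distrib]
      linarith [key_lt_aux π.top π.bot k hk2 (hirr k hk1 hk2)]
    · rw [Finset.sum_sub_distrib]
      linarith [key_lt_aux π.bot π.top k hk2 (Ne.symm (hirr k hk1 hk2))]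
  have hrep : Theta π = ⋂ k ∈ Finset.Ico 1 (Fintype.card A),
      ({τ : A → ℝ | 0 < ∑ ξ ∈ Finset.univ.filter (fun ξ => (π.top ξ : ℕ) < k), τ ξ} ∩
       {τ : A → ℝ | ∑ ξ ∈ Finset.univ.filter (fun ξ => (π.bot ξ : ℕ) < k), τ ξ < 0}) := by
    ext τ
    simp only [Theta, Set.mem_setOf_eq, Set.mem_iInter, Set.mem_inter_iff,
      Finset.mem_Ico]
    constructor
    · intro h k hk
      exact ⟨(h k hk.1 hk.2).1, (h k hk.1 hk.2).2⟩
    · intro h k hk1 hk2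
      exact h k ⟨hk1, hk2⟩
  have hlin : ∀ s : Finset A, IsLinearMap ℝ (fun τ : A → ℝ => ∑ ξ ∈ s, τ ξ) :=
    fun s =>
      ⟨fun x y => by simp [Finset.sum_add_distrib],
       fun c x => by simp [Finset.mul_sum, Pi.smul_apply, smul_eq_mul]⟩
  refine ⟨hmem, ⟨_, hmem⟩, ?_, ?_, ?_⟩
  · rw [hrep]
    refine isOpen_biInter_finset fun k _ => IsOpen.inter ?_ ?_
    · exact isOpen_lt continuous_const
        (continuous_finset_sum _ fun i _ => continuous_apply i)
    · exact isOpen_lt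
        (continuous_finset_sum _ fun i _ => continuous_apply i) continuous_const
  · rw [hrep]
    exact convex_iInter₂ fun k _ =>
      (convex_halfSpace_gt (hlin _) 0).inter (convex_halfSpace_lt (hlin _) 0)
  · intro c hc τ hτ k hk1 hk2
    obtain ⟨h1, h2⟩ := hτ k hk1 hk2
    have e1 : ∀ s : Finset A, ∑ ξ ∈ s, (c • τ) ξ = c * ∑ ξ ∈ s, τ ξ := fun s => by
      simp [Finset.mul_sum, Pi.smul_apply, smul_eq_mul]
    exact ⟨by rw [e1]; exact mul_pos hc h1,
           by rw [e1]; exact mul_neg_of_pos_of_neg hc h2⟩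

end Rauzy
end
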